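/- arXiv:1904.05804 — 2 statements merged into one kernel-verified Lean document; each statement's English description precedes it below -/
import Mathlib

section
/- Let G=(V,E) be a connected, locally finite graph, let p∈[0,1], and let n,m ≥ 0. Then for all u,v∈V, A^int_{p,n,n+m}(u,v) ≤ Σ_{w∈V} S^int_{p,n}(u,w) · B^int_{p,m}(w,v); that is, entrywise, A^int_{p,n,n+m} is dominated by the matrix product S^int_{p,n} B^int_{p,m} (equivalently, by symmetry, by B^int_{p,m} S^int_{p,n}). -/
open MeasureTheory Filter Set
open scoped ENNReal NNReal

noncomputable section

namespace Percolation

/-! ### The Bernoulli product measure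

Since the current version of Mathlib does not provide infinite products of probability
measures, we construct the Bernoulli product measure on `I → Bool` (for countable `I`,
the only relevant case: the edge set of a connected locally finite graph is countable)
as the pushforward of the uniform measure on `[0,1)` under the standard Borel
isomorphism extracting independent uniform random variables from the binary digits of
a single uniform random variable. -/

/-- The `j`-th binary digit of a real number `x ∈ [0,1)`. -/
def rbit (j : ℕ) (x : ℝ) : Bool := decide (⌊x * 2 ^ (j + 1)⌋ % 2 = 1)

/-- A sequence of i.i.d. Uniform`[0,1]` random variables of a single uniform random
variable `x`, obtained by splitting the binary digits of `x` into countably many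
subsequences. -/
def unifSeq (i : ℕ) (x : ℝ) : ℝ :=
  ∑' j : ℕ, if rbit (Nat.pair i j) x then ((2 : ℝ) ^ (j + 1))⁻¹ else 0

/-- The product measure `⊗_{i ∈ I} Bernoulli(p i)` on `I → Bool`: coordinates are
independent, and coordinate `i` equals `true` with probability `p i`.  It is realized as
the pushforward of the uniform measure on `[0,1)` under the map sending `x` to the
configuration `fun i => (unifSeq (enc i) x < p i)`, where `enc : I ↪ ℕ`.  (For uncountable
`I`, which never occurs in our applications, we use the junk value `0`.) -/
def bernoulliProduct (I : Type*) (p : I → ℝ) : Measure (I → Bool) := by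
  classical
  exact if h : Countable I then
    Measure.map
      (fun x i => decide (unifSeq ((@Countable.exists_injective_nat I h).choose i) x < p i))
      (volume.restrict (Set.Ico (0 : ℝ) 1))
  else 0

variable {V : Type*} (G : SimpleGraph V)

/-- A percolation configuration: each edge of `G` is open (`true`) or closed (`false`). -/
abbrev Config := G.edgeSet → Bool

/-- The law of Bernoulli-`p` bond percolation on `G`: every edge is open independently
with probability `p`. -/
def percMeasure (p : ℝ) : Measure (Config G) :=
  bernoulliProduct G.edgeSet fun _ => p

/-- The subgraph `G[p]` of open edges determined by a configuration `ω`. -/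
def openGraph (ω : Config G) : SimpleGraph V where
  Adj u v := ∃ h : G.Adj u v, ω ⟨s(u, v), G.mem_edgeSet.mpr h⟩ = true
  symm := by
    constructor
    rintro u v ⟨h, hw⟩
    refine ⟨h.symm, ?_⟩
    have he : (⟨s(v, u), G.mem_edgeSet.mpr h.symm⟩ : G.edgeSet)
        = ⟨s(u, v), G.mem_edgeSet.mpr h⟩ := Subtype.ext (Sym2.eq_swap)
    rw [he]; exact hw
  loopless := ⟨fun v h => G.loopless.irrefl v h.1⟩

/-- The cluster of `v`: the set of vertices joined to `v` by an open path. -/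
def cluster (ω : Config G) (v : V) : Set V := {u | (openGraph G ω).Reachable v u}

/-- The two-point function `τ_p(u,v) = P_p(u ↔ v)`. -/
def tau (p : ℝ) (u v : V) : ℝ≥0∞ :=
  percMeasure G p {ω | (openGraph G ω).Reachable u v}

/-- The `ℓ^q` norm of a nonnegative function on `V`, `q ∈ [1,∞]`. -/
def lqNorm (q : ℝ≥0∞) (f : V → ℝ≥0∞) : ℝ≥0∞ :=
  if q = ∞ then ⨆ v, f v else (∑' v, f v ^ q.toReal) ^ (1 / q.toReal)

/-- The product of a nonnegative matrix with a nonnegative function. -/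
def matMul (M : V → V → ℝ≥0∞) (f : V → ℝ≥0∞) : V → ℝ≥0∞ := fun v => ∑' u, M v u * f u

/-- The `L^q → L^q` operator norm `‖M‖_{q→q}` of a nonnegative matrix `M`:
the supremum of `‖Mf‖_q / ‖f‖_q` over nonzero nonnegative `f ∈ L^q(V)`. -/
def opNorm (q : ℝ≥0∞) (M : V → V → ℝ≥0∞) : ℝ≥0∞ :=
  ⨆ f : {f : V → ℝ≥0∞ // f ≠ 0 ∧ lqNorm q f ≠ ∞},
    lqNorm q (matMul M f.1) / lqNorm q f.1

/-- `p_{q→q}(G)`, the supremum of those `p ∈ [0,1]` with `‖T_p‖_{q→q} < ∞`. -/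
def pqq (q : ℝ≥0∞) : ℝ :=
  sSup {p : ℝ | p ∈ Set.Icc (0 : ℝ) 1 ∧ opNorm q (tau G p) < ∞}

/-- The critical probability `p_c(G)`: the infimum of those `p` for which `G[p]` has an
infinite cluster almost surely. -/
def pc : ℝ :=
  sInf {p : ℝ | p ∈ Set.Icc (0 : ℝ) 1 ∧
    percMeasure G p {ω | ∃ v : V, (cluster G ω v).Infinite} = 1}

/-- `G` is (vertex-)transitive: `Aut(G)` acts transitively on `V`. -/
def VertexTransitive : Prop := ∀ u v : V, ∃ φ : G ≃g G, φ u = v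

/-- `G` is quasi-transitive: the action of `Aut(G)` on `V` has finitely many orbits. -/
def QuasiTransitive : Prop := ∃ S : Finset V, ∀ v : V, ∃ φ : G ≃g G, φ v ∈ S

/-- The set of edges of `G` with exactly one endpoint in `K`. -/
def edgeBoundary (K : Set V) : Set (Sym2 V) :=
  {e | e ∈ G.edgeSet ∧ ∃ u v : V, e = s(u, v) ∧ u ∈ K ∧ v ∉ K}

/-- `G` is nonamenable: some `c > 0` has `|∂_E K| ≥ c ∑_{v ∈ K} deg(v)` for all finite `K`. -/
def Nonamenable : Prop :=
  ∃ c : ℝ, 0 < c ∧ ∀ K : Finset V,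
    c * ∑ v ∈ K, ((G.neighborSet v).ncard : ℝ) ≤ ((edgeBoundary G (K : Set V)).ncard : ℝ)

/-- The matrix `C_{p,n}(u,v) = τ_p(u,v) 𝟙[d(u,v) ≥ n]`. -/
def Cmat (p : ℝ) (n : ℕ) : V → V → ℝ≥0∞ :=
  fun u v => if n ≤ G.dist u v then tau G p u v else 0

/-- The matrix `S_{p,n}(u,v) = τ_p(u,v) 𝟙[d(u,v) = n]`. -/
def Smat (p : ℝ) (n : ℕ) : V → V → ℝ≥0∞ :=
  fun u v => if G.dist u v = n then tau G p u v else 0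

/-- The matrix `B_{p,n}(u,v) = τ_p(u,v) 𝟙[d(u,v) ≤ n]`. -/
def Bmat (p : ℝ) (n : ℕ) : V → V → ℝ≥0∞ :=
  fun u v => if G.dist u v ≤ n then tau G p u v else 0

/-- The matrix `C^int_{p,n}(u,v) = P_p(u ↔ v and d_int(u,v) ≥ n)`. -/
def CintMat (p : ℝ) (n : ℕ) : V → V → ℝ≥0∞ :=
  fun u v => percMeasure G p
    {ω | (openGraph G ω).Reachable u v ∧ (n : ℕ∞) ≤ (openGraph G ω).edist u v}

/-- The matrix `B^int_{p,n}(u,v) = P_p(d_int(u,v) ≤ n)`. -/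
def BintMat (p : ℝ) (n : ℕ) : V → V → ℝ≥0∞ :=
  fun u v => percMeasure G p {ω | (openGraph G ω).edist u v ≤ (n : ℕ∞)}

/-- The matrix `S^int_{p,n}(u,v) = P_p(d_int(u,v) = n)`. -/
def SintMat (p : ℝ) (n : ℕ) : V → V → ℝ≥0∞ :=
  fun u v => percMeasure G p {ω | (openGraph G ω).edist u v = (n : ℕ∞)}

/-- The matrix `A^int_{p,n,m}(u,v) = P_p(n ≤ d_int(u,v) ≤ m)`. -/
def AintMat (p : ℝ) (n m : ℕ) : V → V → ℝ≥0∞ :=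
  fun u v => percMeasure G p
    {ω | (n : ℕ∞) ≤ (openGraph G ω).edist u v ∧ (openGraph G ω).edist u v ≤ (m : ℕ∞)}

/-- `sup { τ_p(u,v) : d(u,v) ≥ n }`. -/
def supTau (p : ℝ) (n : ℕ) : ℝ≥0∞ :=
  ⨆ (u : V) (v : V) (_ : n ≤ G.dist u v), tau G p u v

/-- The exponential decay rate `ξ_p` of the two-point function. -/
def xi (p : ℝ) : ℝ :=
  - Filter.limsup (fun n : ℕ => Real.log (supTau G p n).toReal / n) Filter.atTop

/-- The exponential connectivity decay threshold `p_exp(G)`. -/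
def pexp : ℝ := sSup {p : ℝ | p ∈ Set.Icc (0 : ℝ) 1 ∧ 0 < xi G p}

/-- The ball of radius `n` about `v` in the graph metric of `G`. -/
def gball (v : V) (n : ℕ) : Set V := {u | G.dist v u ≤ n}

/-- The exponential volume growth rate `γ(G) = lim (1/n) sup_v log |B(v,n)|`. -/
def gammaGrowth : ℝ :=
  Filter.limsup
    (fun n : ℕ => sSup {x : ℝ | ∃ v : V, x = Real.log ((gball G v n).ncard : ℝ)} / n)
    Filter.atTop

/-- The extrinsic radius `rad(K_v) = sup { d(v,u) : u ∈ K_v }` (valued in `ℕ∞`). -/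
def extRad (ω : Config G) (v : V) : ℕ∞ :=
  ⨆ u ∈ cluster G ω v, (G.dist v u : ℕ∞)

/-- The intrinsic radius `rad_int(K_v) = sup { d_int(v,u) : u ∈ K_v }` (valued in `ℕ∞`). -/
def intRad (ω : Config G) (v : V) : ℕ∞ :=
  ⨆ u ∈ cluster G ω v, (openGraph G ω).edist v u

/-- The expected number of vertices of `W` in the cluster of `v`, `E_p |K_v ∩ W|`. -/
def expClusterInter (p : ℝ) (v : V) (W : Set V) : ℝ≥0∞ :=
  ∫⁻ ω, ((cluster G ω v ∩ W).encard : ℝ≥0∞) ∂(percMeasure G p)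

/-- The annealed upper logarithmic density of clusters. -/
def deltaLog (p : ℝ) : ℝ :=
  Filter.limsup
    (fun n : ℕ => sSup {x : ℝ | ∃ v : V,
      x = Real.log (expClusterInter G p v (gball G v n)).toReal /
          Real.log ((gball G v n).ncard : ℝ)})
    Filter.atTop

/-- A walk in `G` all of whose edges are open in the configuration `ω`. -/
def IsOpenWalk (ω : Config G) {a b : V} (w : G.Walk a b) : Prop :=
  ∀ e : Sym2 V, ∀ he : e ∈ w.edges, ω ⟨e, w.edges_subset_edgeSet he⟩ = true

/-- Joint law of Bernoulli-`p` percolation and `ℓ` independent ghost fields with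
intensities `h 0, …, h (ℓ-1)`: the configuration space is indexed by
`G.edgeSet ⊕ (Fin ℓ × V)`, the first summand carrying the percolation configuration and
the second carrying the ghost fields; a vertex belongs to the `i`-th ghost field with
probability `1 - exp (-h i)`. -/
def ghostJoint (p : ℝ) (ℓ : ℕ) (h : Fin ℓ → ℝ) :
    Measure ((G.edgeSet ⊕ (Fin ℓ × V)) → Bool) :=
  bernoulliProduct _ (Sum.elim (fun _ => p) (fun iv => 1 - Real.exp (-h iv.1)))

/-- The percolation configuration in the joint percolation/ghost-field space. -/
def percPart {ℓ : ℕ} (x : (G.edgeSet ⊕ (Fin ℓ × V)) → Bool) : Config G :=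
  fun e => x (Sum.inl e)

/-- The magnetization `M_{p,h}(v) = P_{p,h}(v ↔ 𝒢)`. -/
def mag (p h : ℝ) (v : V) : ℝ≥0∞ :=
  ghostJoint G p 1 (fun _ => h)
    {x | ∃ t : V, x (Sum.inr (0, t)) = true ∧
      (openGraph G (percPart G x)).Reachable v t}

/-- `v` is a trifurcation point of the configuration `ω`: its cluster is infinite, and
deleting `v` splits the cluster into exactly three infinite clusters. -/
def IsTrifurcation (ω : Config G) (v : V) : Prop :=
  (cluster G ω v).Infinite ∧
  {C : ((openGraph G ω).induce {u : V | u ≠ v}).ConnectedComponent |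
      (Subtype.val '' C.supp).Infinite ∧ Subtype.val '' C.supp ⊆ cluster G ω v}.encard = 3

end Percolation

open Percolation MeasureTheory ProbabilityTheory Filter Set
open scoped ENNReal

noncomputable section

namespace S6
open Percolation

lemma measurableSet_bool (s : Set Bool) : MeasurableSet s :=
  s.to_countable.measurableSet

open scoped Classical in
lemma set_bool_eq (s : Set Bool) :
    s = (if true ∈ s then ({true} : Set Bool) else ∅) ∪
        (if false ∈ s then ({false} : Set Bool) else ∅) := by
  ext b
  cases b <;> by_cases h1 : true ∈ s <;> by_cases h2 : false ∈ s <;> simp [h1, h2]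

lemma measurable_boolfun {α : Type*} {m : MeasurableSpace α} {f : α → Bool}
    (h : MeasurableSet[m] (f ⁻¹' {true})) : Measurable[m] f := by
  intro s _
  have hf : f ⁻¹' {false} = (f ⁻¹' {true})ᶜ := by
    ext x; cases hx : f x <;> simp [hx]
  rw [set_bool_eq s]
  split_ifs <;>
    simp only [Set.preimage_union, Set.union_empty, Set.empty_union, Set.preimage_empty, hf]
  · exact h.union h.compl
  · exact h
  · exact h.compl
  · exact MeasurableSet.empty

lemma measurable_rbit (l : ℕ) : Measurable (rbit l) := by
  apply measurable_boolfun
  have heq : rbit l ⁻¹' {true} = (fun x : ℝ => ⌊x * 2 ^ (l + 1)⌋) ⁻¹' {z : ℤ | z % 2 = 1} := by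
    ext x; simp [rbit]
  rw [heq]
  exact (measurable_id.mul_const _).floor (Set.to_countable _).measurableSet

lemma rbit_eq_testBit {N l k : ℕ} (hl : l < N) {x : ℝ}
    (hx1 : (k : ℝ) / 2 ^ N ≤ x) (hx2 : x < ((k : ℝ) + 1) / 2 ^ N) :
    rbit l x = Nat.testBit k (N - (l + 1)) := by
  set d : ℕ := N - (l + 1) with hd
  have hdN : d + (l + 1) = N := by omega
  have h2d : (0:ℝ) < 2 ^ d := by positivity
  have hNsplit : (2:ℝ) ^ N = 2 ^ d * 2 ^ (l+1) := by rw [← pow_add, hdN]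
  have hfloor : ⌊x * 2 ^ (l + 1)⌋ = ((k / 2 ^ d : ℕ) : ℤ) := by
    rw [Int.floor_eq_iff]
    constructor
    · have hstep : ((k / 2 ^ d : ℕ) : ℝ) * 2 ^ d ≤ x * 2 ^ (l+1) * 2 ^ d := by
        calc ((k / 2 ^ d : ℕ) : ℝ) * 2 ^ d ≤ (k : ℝ) := by
              exact_mod_cast Nat.div_mul_le_self k (2 ^ d)
          _ = ((k:ℝ) / 2 ^ N) * 2 ^ N := by field_simp
          _ ≤ x * 2 ^ N := mul_le_mul_of_nonneg_right hx1 (by positivity)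
          _ = x * 2 ^ (l+1) * 2 ^ d := by rw [hNsplit]; ring
      have := le_of_mul_le_mul_right hstep h2d
      exact_mod_cast this
    · have h2 : x * 2 ^ (l+1) < ((k:ℝ) + 1) / 2 ^ d := by
        rw [lt_div_iff₀ h2d]
        calc x * 2 ^ (l+1) * 2 ^ d = x * 2 ^ N := by rw [hNsplit]; ring
          _ < (((k:ℝ)+1) / 2 ^ N) * 2 ^ N := mul_lt_mul_of_pos_right hx2 (by positivity)
          _ = (k:ℝ) + 1 := by field_simp
      refine h2.trans_le ?_
      have hnat : k + 1 ≤ (k / 2 ^ d + 1) * 2 ^ d := by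
        have hD : 0 < 2 ^ d := pow_pos (by norm_num) d
        calc k + 1 = 2 ^ d * (k / 2 ^ d) + k % 2 ^ d + 1 := by rw [Nat.div_add_mod]
          _ ≤ 2 ^ d * (k / 2 ^ d) + 2 ^ d := by
              have := Nat.mod_lt k hD
              omega
          _ = (k / 2 ^ d + 1) * 2 ^ d := by ring
      rw [div_le_iff₀ h2d]
      exact_mod_cast hnat
  rw [rbit, hfloor, Nat.testBit_eq_decide_div_mod_eq]
  apply decide_eq_decide.mpr
  omega

lemma card_testBit_filter : ∀ (N : ℕ) (P : Finset ℕ), (∀ q ∈ P, q < N) →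
    ((Finset.range (2 ^ N)).filter (fun k => ∀ q ∈ P, Nat.testBit k q = true)).card
      = 2 ^ (N - P.card) := by
  intro N
  induction N with
  | zero =>
    intro P hP
    have hPe : P = ∅ := Finset.eq_empty_of_forall_notMem fun q hq =>
      absurd (hP q hq) (Nat.not_lt_zero q)
    subst hPe
    simp
  | succ N ih =>
    intro P hP
    classical
    set F := (Finset.range (2 ^ (N+1))).filter (fun k => ∀ q ∈ P, Nat.testBit k q = true) with hF
    have hPcard : P.card ≤ N + 1 := by
      have : P ⊆ Finset.range (N+1) := fun q hq => Finset.mem_range.2 (hP q hq)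
      simpa using Finset.card_le_card this
    have hsplit : F.card = (F.filter (fun k => k < 2 ^ N)).card +
        (F.filter (fun k => ¬ k < 2 ^ N)).card :=
      (Finset.card_filter_add_card_filter_not _).symm
    have hhigh : F.filter (fun k => ¬ k < 2 ^ N) =
        ((Finset.range (2 ^ N)).filter
          (fun j => ∀ q ∈ P.erase N, Nat.testBit j q = true)).map
          ⟨fun j => 2 ^ N + j, add_right_injective _⟩ := by
      ext k
      simp only [Finset.mem_filter, Finset.mem_range, Finset.mem_map,
        Function.Embedding.coeFn_mk, hF]
      constructor
      · rintro ⟨⟨hk2, hk3⟩, hk4⟩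
        have hk2' : k < 2 ^ N + 2 ^ N := by
          have : 2 ^ (N+1) = 2 ^ N + 2 ^ N := by ring
          omega
        refine ⟨k - 2 ^ N, ⟨by omega, ?_⟩, by omega⟩
        intro q hq
        have hqP := Finset.mem_of_mem_erase hq
        have hqN : q < N := by
          have := hP q hqP
          have := Finset.ne_of_mem_erase hq
          omega
        have hke : k = 2 ^ N + (k - 2 ^ N) := by omega
        rw [← Nat.testBit_two_pow_add_gt hqN, ← hke]
        exact hk3 q hqP
      · rintro ⟨j, ⟨hj1, hj2⟩, rfl⟩
        have hpow : 2 ^ N + j < 2 ^ (N+1) := by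
          have : 2 ^ (N+1) = 2 ^ N + 2 ^ N := by ring
          omega
        refine ⟨⟨hpow, ?_⟩, by omega⟩
        intro q hq
        rcases Nat.lt_or_ge q N with hqN | hqN
        · rw [Nat.testBit_two_pow_add_gt hqN]
          exact hj2 q (Finset.mem_erase.2 ⟨by omega, hq⟩)
        · have hqeq : q = N := by have := hP q hq; omega
          subst hqeq
          rw [Nat.testBit_two_pow_add_eq, Nat.testBit_lt_two_pow hj1]
          rfl
    have hPer : ∀ q ∈ P.erase N, q < N := by
      intro q hq
      have := hP q (Finset.mem_of_mem_erase hq)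
      have := Finset.ne_of_mem_erase hq
      omega
    have hhighcard : (F.filter (fun k => ¬ k < 2 ^ N)).card = 2 ^ (N - (P.erase N).card) := by
      rw [hhigh, Finset.card_map, ih _ hPer]
    by_cases hN : N ∈ P
    · have hlow : F.filter (fun k => k < 2 ^ N) = ∅ := by
        apply Finset.eq_empty_of_forall_notMem
        intro k hk
        simp only [Finset.mem_filter, hF, Finset.mem_range] at hk
        have h1 := hk.1.2 N hN
        rw [Nat.testBit_lt_two_pow hk.2] at h1
        exact Bool.false_ne_true h1
      have hcardP : 1 ≤ P.card := Finset.card_pos.2 ⟨N, hN⟩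
      rw [hsplit, hlow, hhighcard, Finset.card_erase_of_mem hN]
      have heq : N - (P.card - 1) = N + 1 - P.card := by omega
      rw [heq]
      simp
    · have herase : P.erase N = P := Finset.erase_eq_of_notMem hN
      have hPN : ∀ q ∈ P, q < N := by
        intro q hq
        have h1 := hP q hq
        rcases Nat.lt_or_ge q N with h | h
        · exact h
        · exfalso
          have : q = N := by omega
          exact hN (this ▸ hq)
      have hlow : F.filter (fun k => k < 2 ^ N) =
          (Finset.range (2 ^ N)).filter (fun k => ∀ q ∈ P, Nat.testBit k q = true) := by
        ext k
        simp only [Finset.mem_filter, Finset.mem_range, hF]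
        constructor
        · rintro ⟨⟨_, h2⟩, h3⟩; exact ⟨h3, h2⟩
        · rintro ⟨h1, h2⟩
          have : 2 ^ N < 2 ^ (N+1) := Nat.pow_lt_pow_right (by norm_num) (by omega)
          exact ⟨⟨by omega, h2⟩, h1⟩
      rw [hsplit, hlow, hhighcard, herase, ih _ hPN]
      have hPcardN : P.card ≤ N := by
        have : P ⊆ Finset.range N := fun q hq => Finset.mem_range.2 (hPN q hq)
        simpa using Finset.card_le_card this
      have heq : N + 1 - P.card = (N - P.card) + 1 := by omega
      rw [heq, pow_succ]
      omega

def mu0 : Measure ℝ := volume.restrict (Set.Ico (0:ℝ) 1)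

lemma isProbabilityMeasure_mu0 : IsProbabilityMeasure mu0 := by
  constructor
  rw [mu0, Measure.restrict_apply_univ, Real.volume_Ico]
  norm_num

lemma le_meas {α : Type*} {m m' : MeasurableSpace α} (h : m ≤ m') {s : Set α}
    (hs : MeasurableSet[m] s) : MeasurableSet[m'] s := h s hs

def bitSet (l : ℕ) : Set ℝ := {x | rbit l x = true}

lemma measurableSet_bitSet (l : ℕ) : MeasurableSet (bitSet l) :=
  measurable_rbit l (measurableSet_bool {true})

lemma meas_biInter_bitSet (s : Finset ℕ) :
    mu0 (⋂ l ∈ s, bitSet l) = (2:ℝ≥0∞)⁻¹ ^ s.card := by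
  classical
  set N : ℕ := s.sup id + 1 with hN
  have hsN : ∀ l ∈ s, l < N := fun l hl =>
    Nat.lt_succ_of_le (Finset.le_sup (f := id) hl)
  set E : Set ℝ := ⋂ l ∈ s, bitSet l with hE
  have hEmeas : MeasurableSet E :=
    MeasurableSet.biInter s.countable_toSet fun l _ => measurableSet_bitSet l
  have h2N : (0:ℝ) < 2 ^ N := by positivity
  set I : ℕ → Set ℝ := fun k => Set.Ico ((k:ℝ) / 2 ^ N) (((k:ℝ) + 1) / 2 ^ N) with hI
  have hIvol : ∀ k, volume (I k) = ENNReal.ofReal (1 / 2 ^ N) := by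
    intro k
    rw [hI]
    simp only []
    rw [Real.volume_Ico]
    congr 1
    field_simp
    ring
  have hcover : E ∩ Set.Ico (0:ℝ) 1 = ⋃ k ∈ Finset.range (2 ^ N), E ∩ I k := by
    ext x
    simp only [Set.mem_inter_iff, Set.mem_iUnion, Finset.mem_range, Set.mem_Ico, hI]
    constructor
    · rintro ⟨hxE, hx0, hx1⟩
      have hfl : (0:ℤ) ≤ ⌊x * 2 ^ N⌋ := Int.floor_nonneg.2 (by positivity)
      set k : ℕ := (⌊x * 2 ^ N⌋).toNat with hk
      have hkfl : (k : ℤ) = ⌊x * 2 ^ N⌋ := Int.toNat_of_nonneg hfl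
      have hk1 : (k:ℝ) ≤ x * 2 ^ N := by
        have h := Int.floor_le (x * 2 ^ N)
        rw [← hkfl] at h
        exact_mod_cast h
      have hk2 : x * 2 ^ N < (k:ℝ) + 1 := by
        have h := Int.lt_floor_add_one (x * 2 ^ N)
        rw [← hkfl] at h
        exact_mod_cast h
      refine ⟨k, ?_, hxE, ?_, ?_⟩
      · have hlt : x * 2 ^ N < 2 ^ N := by
          calc x * 2 ^ N < 1 * 2 ^ N := mul_lt_mul_of_pos_right hx1 h2N
            _ = 2 ^ N := one_mul _
        have hkr : (k:ℝ) < 2 ^ N := lt_of_le_of_lt hk1 hlt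
        exact_mod_cast hkr
      · rw [div_le_iff₀ h2N]; exact hk1
      · rw [lt_div_iff₀ h2N]; exact hk2
    · rintro ⟨k, hk, hxE, hx1, hx2⟩
      refine ⟨hxE, ?_, ?_⟩
      · have h0 : (0:ℝ) ≤ (k:ℝ) / 2 ^ N := by positivity
        linarith
      · have hki : (k + 1 : ℕ) ≤ 2 ^ N := by exact_mod_cast hk
        have hkr : (k:ℝ) + 1 ≤ 2 ^ N := by
          calc (k:ℝ) + 1 = ((k+1 : ℕ) : ℝ) := by push_cast; ring
            _ ≤ ((2 ^ N : ℕ) : ℝ) := by exact_mod_cast hki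
            _ = 2 ^ N := by push_cast; ring
        calc x < ((k:ℝ) + 1) / 2 ^ N := hx2
          _ ≤ 1 := by rw [div_le_one h2N]; exact hkr
  rw [mu0, Measure.restrict_apply hEmeas, hcover]
  have hdisj : (↑(Finset.range (2 ^ N)) : Set ℕ).PairwiseDisjoint (fun k => E ∩ I k) := by
    intro a _ b _ hab
    apply Set.disjoint_of_subset Set.inter_subset_right Set.inter_subset_right
    rw [hI]
    simp only []
    rw [Set.Ico_disjoint_Ico]
    rcases lt_or_gt_of_ne hab with hlt | hlt
    · refine le_trans (min_le_left _ _) (le_trans ?_ (le_max_right _ _))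
      have : (a:ℝ) + 1 ≤ (b:ℝ) := by exact_mod_cast hlt
      gcongr
    · refine le_trans (min_le_right _ _) (le_trans ?_ (le_max_left _ _))
      have : (b:ℝ) + 1 ≤ (a:ℝ) := by exact_mod_cast hlt
      gcongr
  rw [measure_biUnion_finset hdisj (fun k _ => hEmeas.inter measurableSet_Ico)]
  have hterm : ∀ k ∈ Finset.range (2 ^ N),
      volume (E ∩ I k) = if (∀ l ∈ s, Nat.testBit k (N - (l+1)) = true)
        then ENNReal.ofReal (1 / 2 ^ N) else 0 := by
    intro k _
    split_ifs with hcase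
    · have heq : E ∩ I k = I k := by
        apply Set.inter_eq_self_of_subset_right
        intro x hx
        rw [hE, Set.mem_iInter₂]
        intro l hl
        show rbit l x = true
        rw [rbit_eq_testBit (hsN l hl) hx.1 hx.2]
        exact hcase l hl
      rw [heq, hIvol]
    · push_neg at hcase
      obtain ⟨l, hl, hfalse⟩ := hcase
      have heq : E ∩ I k = ∅ := by
        ext x
        simp only [Set.mem_inter_iff, Set.mem_empty_iff_false, iff_false, not_and]
        intro hxE hxI
        have h1 : rbit l x = true := Set.mem_iInter₂.1 hxE l hl
        rw [rbit_eq_testBit (hsN l hl) hxI.1 hxI.2] at h1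
        exact hfalse h1
      rw [heq, measure_empty]
  rw [Finset.sum_congr rfl hterm, Finset.sum_ite, Finset.sum_const, Finset.sum_const_zero,
    add_zero]
  have hcardeq : ((Finset.range (2^N)).filter
      (fun k => ∀ l ∈ s, Nat.testBit k (N - (l+1)) = true)).card = 2 ^ (N - s.card) := by
    have himg : ∀ k, (∀ l ∈ s, Nat.testBit k (N - (l+1)) = true) ↔
        (∀ q ∈ s.image (fun l => N - (l+1)), Nat.testBit k q = true) := by
      intro k
      constructor
      · intro hh q hq
        obtain ⟨l, hl, rfl⟩ := Finset.mem_image.1 hq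
        exact hh l hl
      · intro hh l hl
        exact hh _ (Finset.mem_image_of_mem _ hl)
    have hfilt : (Finset.range (2^N)).filter
          (fun k => ∀ l ∈ s, Nat.testBit k (N - (l+1)) = true)
        = (Finset.range (2^N)).filter
          (fun k => ∀ q ∈ s.image (fun l => N - (l+1)), Nat.testBit k q = true) := by
      ext k
      simp only [Finset.mem_filter]
      exact and_congr_right fun _ => himg k
    rw [hfilt, Finset.filter_congr_decidable]
    rw [card_testBit_filter N _ (by
      intro q hq
      obtain ⟨l, hl, rfl⟩ := Finset.mem_image.1 hq
      have hlN := hsN l hl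
      show N - (l+1) < N
      omega)]
    congr 1
    rw [Finset.card_image_of_injOn]
    intro a ha b hb hab
    have ha' := hsN a ha
    have hb' := hsN b hb
    have hab' : N - (a+1) = N - (b+1) := hab
    omega
  rw [hcardeq]
  have hofReal : ENNReal.ofReal (1 / 2 ^ N) = ((2:ℝ≥0∞) ^ N)⁻¹ := by
    rw [one_div, ENNReal.ofReal_inv_of_pos h2N]
    congr 1
    rw [ENNReal.ofReal_pow (by norm_num)]
    norm_num
  rw [hofReal]
  have hsc : s.card ≤ N := by
    have hsub : s ⊆ Finset.range N := fun l hl => Finset.mem_range.2 (hsN l hl)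
    simpa using Finset.card_le_card hsub
  have h2 : ((2:ℝ≥0∞) ^ N)⁻¹ = ((2:ℝ≥0∞) ^ (N - s.card))⁻¹ * ((2:ℝ≥0∞) ^ s.card)⁻¹ := by
    rw [← ENNReal.mul_inv (Or.inl (by positivity)) (Or.inl (ENNReal.pow_ne_top ENNReal.ofNat_ne_top))]
    congr 1
    rw [← pow_add]
    congr 1
    omega
  rw [nsmul_eq_mul, h2]
  push_cast
  rw [← mul_assoc, ENNReal.mul_inv_cancel (by positivity) (ENNReal.pow_ne_top ENNReal.ofNat_ne_top), one_mul,
    ENNReal.inv_pow]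

def blockM (S : Set ℕ) : MeasurableSpace ℝ :=
  ⨆ l ∈ S, MeasurableSpace.comap (rbit l) inferInstance

lemma blockM_le (S : Set ℕ) : blockM S ≤ Real.measurableSpace :=
  iSup₂_le fun l _ => (measurable_rbit l).comap_le

lemma bool_eq_generateFrom :
    (inferInstance : MeasurableSpace Bool) = MeasurableSpace.generateFrom {{true}} := by
  apply le_antisymm
  · intro s _
    have h1 : MeasurableSet[MeasurableSpace.generateFrom {{true}}] ({true} : Set Bool) :=
      MeasurableSpace.measurableSet_generateFrom rfl
    have h2 : MeasurableSet[MeasurableSpace.generateFrom {{true}}] ({false} : Set Bool) := by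
      have hc : ({false} : Set Bool) = ({true} : Set Bool)ᶜ := by
        ext b; cases b <;> simp
      rw [hc]; exact h1.compl
    have h0 : MeasurableSet[MeasurableSpace.generateFrom {{true}}] (∅ : Set Bool) :=
      @MeasurableSet.empty _ (MeasurableSpace.generateFrom {{true}})
    rw [set_bool_eq s]
    split_ifs
    · exact h1.union h2
    · exact h1.union h0
    · exact h0.union h2
    · exact h0.union h0
  · exact MeasurableSpace.generateFrom_le fun t _ => measurableSet_bool t

lemma comap_rbit_eq (l : ℕ) :
    MeasurableSpace.comap (rbit l) inferInstance
      = MeasurableSpace.generateFrom {bitSet l} := by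
  rw [bool_eq_generateFrom, MeasurableSpace.comap_generateFrom]
  congr 1
  rw [Set.image_singleton]
  rfl

lemma iIndep_rbit :
    iIndep (fun l => MeasurableSpace.comap (rbit l) inferInstance) mu0 := by
  haveI := isProbabilityMeasure_mu0
  apply iIndepSets.iIndep (fun l => (measurable_rbit l).comap_le)
      (fun l => {bitSet l}) (fun l => IsPiSystem.singleton _)
      (fun l => comap_rbit_eq l)
  rw [iIndepSets_iff]
  intro s f hf
  have hfeq : ∀ l ∈ s, f l = bitSet l := fun l hl => hf l hl
  have h1 : (⋂ l ∈ s, f l) = ⋂ l ∈ s, bitSet l := Set.iInter₂_congr hfeq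
  rw [h1, meas_biInter_bitSet]
  have h2 : ∀ l ∈ s, mu0 (f l) = 2⁻¹ := by
    intro l hl
    rw [hfeq l hl]
    have h3 := meas_biInter_bitSet {l}
    simpa using h3
  rw [Finset.prod_congr rfl h2, Finset.prod_const]

lemma indep_blockM {S T : Set ℕ} (hST : Disjoint S T) :
    Indep (blockM S) (blockM T) mu0 :=
  indep_iSup_of_disjoint (fun l => (measurable_rbit l).comap_le) iIndep_rbit hST

lemma measurable_unifSeq_block (i : ℕ) (S : Set ℕ) (hS : ∀ j, Nat.pair i j ∈ S) :
    Measurable[blockM S] (unifSeq i) := by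
  have hterm : ∀ j, Measurable[blockM S]
      (fun x => if rbit (Nat.pair i j) x then ((2:ℝ) ^ (j+1))⁻¹ else (0:ℝ)) := by
    intro j
    have hb : Measurable[blockM S] (rbit (Nat.pair i j)) := by
      apply Measurable.of_comap_le
      rw [blockM]
      exact le_iSup₂ (f := fun l (_ : l ∈ S) => MeasurableSpace.comap (rbit l) inferInstance)
        (Nat.pair i j) (hS j)
    exact Measurable.ite (hb (measurableSet_bool {true})) measurable_const measurable_const
  have hsummable : ∀ x, Summable
      (fun j => if rbit (Nat.pair i j) x then ((2:ℝ) ^ (j+1))⁻¹ else (0:ℝ)) := by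
    intro x
    have h0 : Summable (fun j : ℕ => ((2:ℝ)⁻¹) ^ j) :=
      summable_geometric_of_lt_one (by norm_num) (by norm_num)
    have h1 : Summable (fun j : ℕ => ((2:ℝ)⁻¹) ^ (j+1)) :=
      h0.comp_injective (add_left_injective 1)
    apply Summable.of_nonneg_of_le (fun j => by positivity) (fun j => ?_)
      (h1.congr (fun j => by rw [inv_pow]))
    split_ifs
    · exact le_rfl
    · positivity
  have hpartial : ∀ J : ℕ, Measurable[blockM S] (fun x => ∑ j ∈ Finset.range J,
      if rbit (Nat.pair i j) x then ((2:ℝ) ^ (j+1))⁻¹ else (0:ℝ)) :=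
    fun J => Finset.measurable_sum _ (fun j _ => hterm j)
  refine @measurable_of_tendsto_metrizable ℝ ℝ (blockM S) _ _ _ _ _ _ hpartial ?_
  rw [tendsto_pi_nhds]
  intro x
  exact ((hsummable x).hasSum).tendsto_sum_nat

def coordM {I : Type*} (r : Set I) : MeasurableSpace (I → Bool) :=
  ⨆ i ∈ r, MeasurableSpace.comap (fun ω => ω i) inferInstance

lemma coordM_le {I : Type*} (r : Set I) : coordM r ≤ MeasurableSpace.pi :=
  iSup₂_le fun i _ => (measurable_pi_apply i).comap_le

lemma measurable_coord_block (i : ℕ) (c : ℝ) :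
    Measurable[blockM (Set.range (Nat.pair i))] (fun x => decide (unifSeq i x < c)) := by
  have hu : Measurable[blockM (Set.range (Nat.pair i))] (unifSeq i) :=
    measurable_unifSeq_block i _ (fun j => ⟨j, rfl⟩)
  apply measurable_boolfun
  have heq : (fun x => decide (unifSeq i x < c)) ⁻¹' {true} = unifSeq i ⁻¹' Set.Iio c := by
    ext x; simp
  rw [heq]
  exact hu measurableSet_Iio



lemma bernoulliProduct_eq {I : Type*} (h : Countable I) (p : I → ℝ) :
    Percolation.bernoulliProduct I p = Measure.map
      (fun x i => decide (unifSeq ((@Countable.exists_injective_nat I h).choose i) x < p i))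
      mu0 := by
  rw [Percolation.bernoulliProduct]
  rw [dif_pos h]
  rfl

lemma measurable_coords {I : Type*} (h : Countable I) (p : I → ℝ) :
    Measurable (fun (x : ℝ) (i : I) =>
      decide (unifSeq ((@Countable.exists_injective_nat I h).choose i) x < p i)) := by
  apply measurable_pi_lambda
  intro i
  exact (measurable_coord_block _ (p i)).mono (blockM_le _) le_rfl

lemma bernoulliProduct_isProb {I : Type*} (h : Countable I) (p : I → ℝ) :
    IsProbabilityMeasure (Percolation.bernoulliProduct I p) := by
  rw [bernoulliProduct_eq h p]
  haveI := isProbabilityMeasure_mu0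
  exact Measure.isProbabilityMeasure_map (measurable_coords h p).aemeasurable

theorem bernoulliProduct_indep {I : Type*} (h : Countable I) (p : I → ℝ) {r : Set I}
    {A B : Set (I → Bool)} (hA : MeasurableSet[coordM r] A)
    (hB : MeasurableSet[coordM rᶜ] B) :
    Percolation.bernoulliProduct I p (A ∩ B)
      = Percolation.bernoulliProduct I p A * Percolation.bernoulliProduct I p B := by
  haveI := isProbabilityMeasure_mu0
  have hencInj : Function.Injective (@Countable.exists_injective_nat I h).choose :=
    (@Countable.exists_injective_nat I h).choose_spec
  set enc : I → ℕ := (@Countable.exists_injective_nat I h).choose with henc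
  set F : ℝ → I → Bool := fun x i => decide (unifSeq (enc i) x < p i) with hF
  have hFmeas : Measurable F := measurable_coords h p
  have hcomap : ∀ (t : Set I), MeasurableSpace.comap F (coordM t)
      ≤ blockM (⋃ i ∈ t, Set.range (Nat.pair (enc i))) := by
    intro t
    rw [coordM, MeasurableSpace.comap_iSup]
    apply iSup_le
    intro i
    rw [MeasurableSpace.comap_iSup]
    apply iSup_le
    intro hi
    rw [MeasurableSpace.comap_comp]
    have h1 : MeasurableSpace.comap ((fun ω : I → Bool => ω i) ∘ F) inferInstance
        ≤ blockM (Set.range (Nat.pair (enc i))) :=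
      (measurable_coord_block (enc i) (p i)).comap_le
    refine h1.trans ?_
    rw [blockM, blockM]
    apply iSup₂_le
    intro l hl
    exact le_iSup₂ (f := fun l (_ : l ∈ ⋃ i ∈ t, Set.range (Nat.pair (enc i))) =>
      MeasurableSpace.comap (Percolation.rbit l) inferInstance) l (Set.mem_biUnion hi hl)
  have hdisj : Disjoint (⋃ i ∈ r, Set.range (Nat.pair (enc i)))
      (⋃ i ∈ rᶜ, Set.range (Nat.pair (enc i))) := by
    rw [Set.disjoint_left]
    rintro a haS haT
    obtain ⟨i, hi, haS⟩ := Set.mem_iUnion₂.1 haS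
    obtain ⟨j, hj⟩ := haS
    obtain ⟨i', hi', haT⟩ := Set.mem_iUnion₂.1 haT
    obtain ⟨j', hj'⟩ := haT
    have hpair : Nat.pair (enc i) j = Nat.pair (enc i') j' := by rw [hj, hj']
    have hun := congrArg Nat.unpair hpair
    rw [Nat.unpair_pair, Nat.unpair_pair] at hun
    have hii : enc i = enc i' := (Prod.ext_iff.1 hun).1
    have heq : i = i' := hencInj hii
    exact hi' (heq ▸ hi)
  have hIndep := indep_blockM hdisj
  have hA' : MeasurableSet[blockM (⋃ i ∈ r, Set.range (Nat.pair (enc i)))] (F ⁻¹' A) :=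
    hcomap r _ ⟨A, hA, rfl⟩
  have hB' : MeasurableSet[blockM (⋃ i ∈ rᶜ, Set.range (Nat.pair (enc i)))] (F ⁻¹' B) :=
    hcomap rᶜ _ ⟨B, hB, rfl⟩
  have hAamb : MeasurableSet A := coordM_le r A hA
  have hBamb : MeasurableSet B := coordM_le rᶜ B hB
  rw [bernoulliProduct_eq h p]
  rw [Measure.map_apply hFmeas (hAamb.inter hBamb), Measure.map_apply hFmeas hAamb,
    Measure.map_apply hFmeas hBamb, Set.preimage_inter]
  exact (Indep_iff _ _ _).1 hIndep _ _ hA' hB'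

/-! ### Graph lemmas -/

section Graph

open SimpleGraph

variable {V : Type*}

lemma walk_eq_of_support_eq {G : SimpleGraph V} {a b : V} (p : G.Walk a b) :
    ∀ (q : G.Walk a b), p.support = q.support → p = q := by
  induction p with
  | nil =>
    intro q h
    cases q with
    | nil => rfl
    | cons h' q' =>
      exfalso
      rw [SimpleGraph.Walk.support_nil, SimpleGraph.Walk.support_cons] at h
      injection h with _ h2
      exact q'.support_ne_nil h2.symm
  | cons h' p' ih =>
    intro q h
    cases q with
    | nil =>
      exfalso
      rw [SimpleGraph.Walk.support_nil, SimpleGraph.Walk.support_cons] at h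
      injection h with _ h2
      exact p'.support_ne_nil h2
    | cons h'' q' =>
      rw [SimpleGraph.Walk.support_cons, SimpleGraph.Walk.support_cons] at h
      injection h with _ h2
      have h2' := h2
      rw [p'.support_eq_cons, q'.support_eq_cons] at h2'
      injection h2' with hc _
      subst hc
      rw [ih q' h2]

lemma walk_countable {G : SimpleGraph V} [Countable V] (a b : V) : Countable (G.Walk a b) := by
  have hinj : Function.Injective (fun p : G.Walk a b => p.support) :=
    fun p q h => walk_eq_of_support_eq p q h
  exact hinj.countable

lemma openGraph_adj_iff (G : SimpleGraph V) (ω : Config G) {a b : V} :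
    (openGraph G ω).Adj a b ↔ ∃ h : G.Adj a b, ω ⟨s(a, b), G.mem_edgeSet.mpr h⟩ = true :=
  Iff.rfl

lemma openGraph_le (G : SimpleGraph V) (ω : Config G) : openGraph G ω ≤ G :=
  fun _ _ h => ((openGraph_adj_iff G ω).1 h).1

lemma mem_openGraph_edgeSet (G : SimpleGraph V) (ω : Config G) {e : Sym2 V}
    (he : e ∈ G.edgeSet) (ho : ω ⟨e, he⟩ = true) : e ∈ (openGraph G ω).edgeSet := by
  induction e using Sym2.ind with
  | _ a b => exact (openGraph_adj_iff G ω).2 ⟨G.mem_edgeSet.1 he, ho⟩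

lemma open_of_mem_openGraph_edgeSet (G : SimpleGraph V) (ω : Config G) {e : Sym2 V}
    (he : e ∈ (openGraph G ω).edgeSet) (heG : e ∈ G.edgeSet) : ω ⟨e, heG⟩ = true := by
  induction e using Sym2.ind with
  | _ a b => exact ((openGraph_adj_iff G ω).1 he).2

lemma edist_le_iff_open_walk (G : SimpleGraph V) (ω : Config G) (a b : V) (k : ℕ) :
    (openGraph G ω).edist a b ≤ (k : ℕ∞) ↔
      ∃ q : G.Walk a b, q.length ≤ k ∧ IsOpenWalk G ω q := by
  constructor
  · intro hle
    have hne : (openGraph G ω).edist a b ≠ ⊤ :=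
      ne_top_of_le_ne_top (by simp) hle
    obtain ⟨P, hP⟩ := SimpleGraph.exists_walk_of_edist_ne_top hne
    have hsub : ∀ e ∈ P.edges, e ∈ G.edgeSet := fun e he =>
      SimpleGraph.edgeSet_mono (openGraph_le G ω) (P.edges_subset_edgeSet he)
    refine ⟨P.transfer G hsub, ?_, ?_⟩
    · rw [SimpleGraph.Walk.length_transfer]
      have : ((P.length : ℕ∞)) ≤ (k : ℕ∞) := le_of_eq_of_le hP hle
      exact_mod_cast this
    · intro e he
      rw [SimpleGraph.Walk.edges_transfer] at he
      exact open_of_mem_openGraph_edgeSet G ω (P.edges_subset_edgeSet he) _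
  · rintro ⟨q, hlen, hopen⟩
    have hsub : ∀ e ∈ q.edges, e ∈ (openGraph G ω).edgeSet := fun e he =>
      mem_openGraph_edgeSet G ω (q.edges_subset_edgeSet he) (hopen e he)
    calc (openGraph G ω).edist a b ≤ ((q.transfer _ hsub).length : ℕ∞) :=
          SimpleGraph.edist_le _
      _ = (q.length : ℕ∞) := by rw [SimpleGraph.Walk.length_transfer]
      _ ≤ (k : ℕ∞) := by exact_mod_cast hlen

lemma isOpenWalk_cons {G : SimpleGraph V} {ω : Config G} {a b c : V} {h : G.Adj a b}
    {q : G.Walk b c} :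
    IsOpenWalk G ω (SimpleGraph.Walk.cons h q) ↔
      (ω ⟨s(a, b), G.mem_edgeSet.2 h⟩ = true ∧ IsOpenWalk G ω q) := by
  constructor
  · intro H
    exact ⟨H _ (by simp), fun e he => H e (by simp [he])⟩
  · rintro ⟨h1, h2⟩ e he
    rw [SimpleGraph.Walk.edges_cons, List.mem_cons] at he
    rcases he with rfl | he
    · exact h1
    · exact h2 e he

/-- The set of explored edges: those with an endpoint within intrinsic distance `n-1`
of `u`. -/
def Rset (G : SimpleGraph V) (u : V) (n : ℕ) (ω : Config G) : Set G.edgeSet :=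
  {e | ∃ x ∈ (e : Sym2 V), (openGraph G ω).edist u x ≤ ((n - 1 : ℕ) : ℕ∞)}

lemma enat_le_sub_of_add_le {d : ℕ∞} {k n : ℕ} (h : d + (k + 1 : ℕ) ≤ (n : ℕ∞)) :
    d ≤ ((n - 1 : ℕ) : ℕ∞) := by
  cases d using ENat.recTopCoe with
  | top => simp at h
  | coe j =>
    have h' : ((j + (k+1) : ℕ) : ℕ∞) ≤ (n : ℕ∞) := by push_cast; push_cast at h; exact h
    have : j + (k+1) ≤ n := by exact_mod_cast h'
    have : j ≤ n - 1 := by omega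
    exact_mod_cast this

lemma enat_eq_coe_of {n : ℕ} (hn : 1 ≤ n) {d : ℕ∞} (h1 : d ≤ (n : ℕ∞))
    (h2 : ¬ d ≤ ((n - 1 : ℕ) : ℕ∞)) : d = (n : ℕ∞) := by
  cases d using ENat.recTopCoe with
  | top => simp at h1
  | coe j =>
    have hj : j ≤ n := by exact_mod_cast h1
    have hj2 : ¬ j ≤ n - 1 := fun hc => h2 (by exact_mod_cast hc)
    have : j = n := by omega
    exact_mod_cast this

lemma enat_not_le_sub {n : ℕ} (hn : 1 ≤ n) {d : ℕ∞} (h : d = (n : ℕ∞)) :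
    ¬ d ≤ ((n - 1 : ℕ) : ℕ∞) := by
  subst h
  intro hc
  have : n ≤ n - 1 := by exact_mod_cast hc
  omega

lemma open_iff_core {G : SimpleGraph V} {u : V} {n : ℕ} (hn : 1 ≤ n) (ω₀ ω : Config G)
    (hagree : ∀ e ∈ Rset G u n ω₀, ω e = ω₀ e) :
    ∀ {y x : V} (q : G.Walk y x),
      (openGraph G ω₀).edist u y + (q.length : ℕ∞) ≤ (n : ℕ∞) →
      (IsOpenWalk G ω₀ q ↔ IsOpenWalk G ω q) := by
  intro y x q
  induction q with
  | nil =>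
    intro _
    constructor <;> intro _ <;> exact fun e he => absurd he (by simp)
  | @cons y z x hadj q ih =>
    intro hle
    rw [SimpleGraph.Walk.length_cons] at hle
    have hyfin : (openGraph G ω₀).edist u y ≤ ((n - 1 : ℕ) : ℕ∞) := by
      apply enat_le_sub_of_add_le (k := q.length)
      exact_mod_cast hle
    have hmem : (⟨s(y, z), G.mem_edgeSet.2 hadj⟩ : G.edgeSet) ∈ Rset G u n ω₀ :=
      ⟨y, Sym2.mem_mk_left y z, hyfin⟩
    have hedge := hagree _ hmem
    rw [isOpenWalk_cons, isOpenWalk_cons, hedge]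
    by_cases hopen : ω₀ ⟨s(y, z), G.mem_edgeSet.2 hadj⟩ = true
    · have hadj' : (openGraph G ω₀).Adj y z := (openGraph_adj_iff G ω₀).2 ⟨hadj, hopen⟩
      have hz : (openGraph G ω₀).edist u z ≤ (openGraph G ω₀).edist u y + 1 := by
        calc (openGraph G ω₀).edist u z
            ≤ (openGraph G ω₀).edist u y + (openGraph G ω₀).edist y z :=
              SimpleGraph.edist_triangle
          _ ≤ (openGraph G ω₀).edist u y + 1 := by
              apply add_le_add le_rfl
              rw [SimpleGraph.edist_eq_one_iff_adj.2 hadj']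
      have hih := ih (by
        calc (openGraph G ω₀).edist u z + (q.length : ℕ∞)
            ≤ ((openGraph G ω₀).edist u y + 1) + (q.length : ℕ∞) := add_le_add hz le_rfl
          _ = (openGraph G ω₀).edist u y + (((q.length + 1 : ℕ)) : ℕ∞) := by push_cast; ring
          _ ≤ (n : ℕ∞) := hle)
      exact and_congr_right fun _ => hih
    · simp [hopen]

lemma edist_le_iff_of_agree {G : SimpleGraph V} {u : V} {n : ℕ} (hn : 1 ≤ n)
    {ω₀ ω : Config G} (hagree : ∀ e ∈ Rset G u n ω₀, ω e = ω₀ e) (x : V) {k : ℕ}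
    (hk : k ≤ n) :
    (openGraph G ω).edist u x ≤ (k : ℕ∞) ↔ (openGraph G ω₀).edist u x ≤ (k : ℕ∞) := by
  have hcore : ∀ (q : G.Walk u x), q.length ≤ k →
      (IsOpenWalk G ω₀ q ↔ IsOpenWalk G ω q) := by
    intro q hq
    apply open_iff_core hn ω₀ ω hagree q
    rw [SimpleGraph.edist_self, zero_add]
    exact_mod_cast le_trans hq hk
  constructor
  · intro h
    obtain ⟨q, hq1, hq2⟩ := (edist_le_iff_open_walk G ω u x k).1 h
    exact (edist_le_iff_open_walk G ω₀ u x k).2 ⟨q, hq1, (hcore q hq1).2 hq2⟩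
  · intro h
    obtain ⟨q, hq1, hq2⟩ := (edist_le_iff_open_walk G ω₀ u x k).1 h
    exact (edist_le_iff_open_walk G ω u x k).2 ⟨q, hq1, (hcore q hq1).1 hq2⟩

lemma Rset_eq_of_agree {G : SimpleGraph V} {u : V} {n : ℕ} (hn : 1 ≤ n)
    {ω₀ ω : Config G} (hagree : ∀ e ∈ Rset G u n ω₀, ω e = ω₀ e) :
    Rset G u n ω = Rset G u n ω₀ := by
  ext e
  constructor <;> rintro ⟨x, hx, hdist⟩ <;> refine ⟨x, hx, ?_⟩
  · exact (edist_le_iff_of_agree hn hagree x (Nat.sub_le n 1)).1 hdist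
  · exact (edist_le_iff_of_agree hn hagree x (Nat.sub_le n 1)).2 hdist

lemma edist_eq_of_agree {G : SimpleGraph V} {u : V} {n : ℕ} (hn : 1 ≤ n)
    {ω₀ ω : Config G} (hagree : ∀ e ∈ Rset G u n ω₀, ω e = ω₀ e) (x : V)
    (h : (openGraph G ω₀).edist u x = (n : ℕ∞)) :
    (openGraph G ω).edist u x = (n : ℕ∞) := by
  apply enat_eq_coe_of hn
  · exact (edist_le_iff_of_agree hn hagree x le_rfl).2 (le_of_eq h)
  · intro hc
    exact enat_not_le_sub hn h ((edist_le_iff_of_agree hn hagree x (Nat.sub_le n 1)).1 hc)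

lemma vball_finite (G : SimpleGraph V) (hlf : G.LocallyFinite) (u : V) (k : ℕ) :
    {x : V | G.edist u x ≤ (k : ℕ∞)}.Finite := by
  induction k with
  | zero =>
    apply Set.Finite.subset (Set.finite_singleton u)
    intro x hx
    have : G.edist u x = 0 := le_antisymm hx (by simp)
    have := SimpleGraph.edist_eq_zero_iff.1 this
    simp [this]
  | succ k ih =>
    have hsub : {x : V | G.edist u x ≤ ((k+1 : ℕ) : ℕ∞)} ⊆
        {u} ∪ ⋃ y ∈ {x : V | G.edist u x ≤ (k : ℕ∞)}, (G.neighborSet y : Set V) := by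
      intro x hx
      by_cases hxu : x = u
      · exact Or.inl hxu
      · have hne : G.edist u x ≠ ⊤ := ne_top_of_le_ne_top (ENat.coe_ne_top (k+1)) hx
        obtain ⟨p, hp⟩ := SimpleGraph.exists_walk_of_edist_ne_top hne
        have hplen : p.length ≤ k + 1 := by
          have : ((p.length : ℕ∞)) ≤ ((k+1 : ℕ) : ℕ∞) := le_of_eq_of_le hp hx
          exact_mod_cast this
        cases hrev : p.reverse with
        | nil => exact absurd rfl hxu
        | @cons _ y _ hadj q =>
          right
          have hylen : q.length = p.length - 1 := by
            have := congrArg SimpleGraph.Walk.length hrev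
            rw [SimpleGraph.Walk.length_reverse, SimpleGraph.Walk.length_cons] at this
            omega
          have hy : G.edist u y ≤ (k : ℕ∞) := by
            calc G.edist u y = G.edist y u := SimpleGraph.edist_comm
              _ ≤ (q.length : ℕ∞) := SimpleGraph.edist_le q
              _ ≤ (k : ℕ∞) := by
                  rw [hylen]
                  have hple : p.length - 1 ≤ k := by omega
                  exact_mod_cast hple
          exact Set.mem_biUnion hy hadj.symm
    apply Set.Finite.subset _ hsub
    apply (Set.finite_singleton u).union
    apply Set.Finite.biUnion ih
    intro y _
    haveI := hlf y
    exact (G.neighborSet y).toFinite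

lemma Rset_finite (G : SimpleGraph V) (hlf : G.LocallyFinite) (u : V) (n : ℕ)
    (ω : Config G) : (Rset G u n ω).Finite := by
  set W : Set V := {x : V | G.edist u x ≤ ((n - 1 : ℕ) : ℕ∞)} with hW
  have hWfin : W.Finite := vball_finite G hlf u (n-1)
  set W' : Set V := W ∪ ⋃ y ∈ W, (G.neighborSet y : Set V) with hW'
  have hW'fin : W'.Finite := by
    apply hWfin.union
    apply Set.Finite.biUnion hWfin
    intro y _
    haveI := hlf y
    exact (G.neighborSet y).toFinite
  classical
  have hsub : Rset G u n ω ⊆ Subtype.val ⁻¹' ((fun x : V × V => s(x.1, x.2)) '' (W' ×ˢ W')) := by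
    rintro ⟨e, heG⟩ ⟨x, hxe, hxd⟩
    have hxW : x ∈ W := le_trans (SimpleGraph.edist_anti (openGraph_le G ω)) hxd
    have hspec : s(x, Sym2.Mem.other' hxe) = e := Sym2.other_spec' hxe
    have hadj : G.Adj x (Sym2.Mem.other' hxe) := by
      rw [← hspec] at heG
      exact G.mem_edgeSet.1 heG
    exact ⟨(x, Sym2.Mem.other' hxe), ⟨Or.inl hxW, Or.inr (Set.mem_biUnion hxW hadj)⟩, hspec⟩
  apply Set.Finite.subset _ hsub
  apply Set.Finite.preimage (Subtype.val_injective.injOn)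
  exact (hW'fin.prod hW'fin).image _

lemma walk_split {G : SimpleGraph V} :
    ∀ (k : ℕ) {a b : V} (p : G.Walk a b), k ≤ p.length →
      ∃ (w : V) (q : G.Walk a w) (r : G.Walk w b), p = q.append r ∧ q.length = k := by
  intro k
  induction k with
  | zero =>
    intro a b p _
    exact ⟨a, SimpleGraph.Walk.nil, p, (p.nil_append).symm, rfl⟩
  | succ k ih =>
    intro a b p hp
    cases p with
    | nil => simp at hp
    | cons h p' =>
      rw [SimpleGraph.Walk.length_cons] at hp
      obtain ⟨w, q, r, heq, hlen⟩ := ih p' (by omega)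
      refine ⟨w, SimpleGraph.Walk.cons h q, r, ?_, ?_⟩
      · rw [SimpleGraph.Walk.cons_append, ← heq]
      · rw [SimpleGraph.Walk.length_cons, hlen]

lemma walk_suffix {G : SimpleGraph V} {w b : V} (r : G.Walk w b) :
    ∀ x ∈ r.support, ∃ r' : G.Walk x b, r'.length ≤ r.length ∧
      ∀ e ∈ r'.edges, e ∈ r.edges := by
  induction r with
  | nil =>
    intro x hx
    rw [SimpleGraph.Walk.support_nil, List.mem_singleton] at hx
    subst hx
    exact ⟨SimpleGraph.Walk.nil, le_rfl, by simp⟩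
  | cons h rr ih =>
    intro x hx
    rw [SimpleGraph.Walk.support_cons, List.mem_cons] at hx
    rcases hx with rfl | hx
    · exact ⟨SimpleGraph.Walk.cons h rr, le_rfl, fun e he => he⟩
    · obtain ⟨r', h1, h2⟩ := ih x hx
      refine ⟨r', ?_, ?_⟩
      · rw [SimpleGraph.Walk.length_cons]
        omega
      · intro e he
        rw [SimpleGraph.Walk.edges_cons]
        exact List.mem_cons_of_mem _ (h2 e he)

lemma coverage {G : SimpleGraph V} {u v : V} {n m : ℕ} (hn : 1 ≤ n) (ω : Config G)
    (h1 : (n : ℕ∞) ≤ (openGraph G ω).edist u v)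
    (h2 : (openGraph G ω).edist u v ≤ ((n + m : ℕ) : ℕ∞)) :
    ∃ w : V, (openGraph G ω).edist u w = (n : ℕ∞) ∧
      ∃ p : G.Walk w v, p.length ≤ m ∧ IsOpenWalk G ω p ∧
        ∀ x ∈ p.support, ¬ ((openGraph G ω).edist u x ≤ ((n - 1 : ℕ) : ℕ∞)) := by
  have hne : (openGraph G ω).edist u v ≠ ⊤ := ne_top_of_le_ne_top (ENat.coe_ne_top (n+m)) h2
  obtain ⟨P, hP⟩ := SimpleGraph.exists_walk_of_edist_ne_top hne
  have hsub : ∀ e ∈ P.edges, e ∈ G.edgeSet := fun e he =>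
    SimpleGraph.edgeSet_mono (openGraph_le G ω) (P.edges_subset_edgeSet he)
  set p₀ : G.Walk u v := P.transfer G hsub with hp₀
  have hopen₀ : IsOpenWalk G ω p₀ := by
    intro e he
    rw [hp₀, SimpleGraph.Walk.edges_transfer] at he
    exact open_of_mem_openGraph_edgeSet G ω (P.edges_subset_edgeSet he) _
  have hlen₀ : p₀.length = P.length := SimpleGraph.Walk.length_transfer _ _
  set L : ℕ := P.length with hL
  have hedL : (openGraph G ω).edist u v = (L : ℕ∞) := hP.symm
  have hnL : n ≤ L := by
    rw [hedL] at h1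
    exact_mod_cast h1
  have hLnm : L ≤ n + m := by
    rw [hedL] at h2
    exact_mod_cast h2
  obtain ⟨w, q, r, hsplit, hq⟩ := walk_split n p₀ (by omega)
  have hedges : ∀ e ∈ q.edges, e ∈ p₀.edges := by
    intro e he
    rw [hsplit, SimpleGraph.Walk.edges_append]
    exact List.mem_append_left _ he
  have hedges_r : ∀ e ∈ r.edges, e ∈ p₀.edges := by
    intro e he
    rw [hsplit, SimpleGraph.Walk.edges_append]
    exact List.mem_append_right _ he
  have hopen_q : IsOpenWalk G ω q := fun e he => hopen₀ e (hedges e he)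
  have hopen_r : IsOpenWalk G ω r := fun e he => hopen₀ e (hedges_r e he)
  have hlen_r : r.length = L - n := by
    have := congrArg SimpleGraph.Walk.length hsplit
    rw [SimpleGraph.Walk.length_append, hlen₀] at this
    omega
  have hwle : (openGraph G ω).edist u w ≤ (n : ℕ∞) :=
    (edist_le_iff_open_walk G ω u w n).2 ⟨q, le_of_eq hq, hopen_q⟩
  have hrv : (openGraph G ω).edist w v ≤ ((L - n : ℕ) : ℕ∞) :=
    (edist_le_iff_open_walk G ω w v (L - n)).2 ⟨r, le_of_eq hlen_r, hopen_r⟩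
  have hweq : (openGraph G ω).edist u w = (n : ℕ∞) := by
    refine le_antisymm hwle ?_
    cases hd : (openGraph G ω).edist u w using ENat.recTopCoe with
    | top => exact le_top
    | coe j =>
      have htri : (openGraph G ω).edist u v ≤
          (openGraph G ω).edist u w + (openGraph G ω).edist w v :=
        SimpleGraph.edist_triangle
      rw [hedL, hd] at htri
      have : (L : ℕ∞) ≤ ((j + (L - n) : ℕ) : ℕ∞) := by
        refine le_trans htri ?_
        push_cast
        exact add_le_add le_rfl hrv
      have hjL : L ≤ j + (L - n) := by exact_mod_cast this
      have : n ≤ j := by omega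
      exact_mod_cast this
  refine ⟨w, hweq, r, by omega, hopen_r, ?_⟩
  intro x hx hc
  obtain ⟨r', hr1, hr2⟩ := walk_suffix r x hx
  have hxv : (openGraph G ω).edist x v ≤ ((L - n : ℕ) : ℕ∞) :=
    (edist_le_iff_open_walk G ω x v (L - n)).2
      ⟨r', by omega, fun e he => hopen_r e (hr2 e he)⟩
  have htri : (openGraph G ω).edist u v ≤
      (openGraph G ω).edist u x + (openGraph G ω).edist x v :=
    SimpleGraph.edist_triangle
  rw [hedL] at htri
  have : (L : ℕ∞) ≤ ((n - 1 + (L - n) : ℕ) : ℕ∞) := by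
    refine le_trans htri ?_
    push_cast
    exact add_le_add hc hxv
  have hfin : L ≤ n - 1 + (L - n) := by exact_mod_cast this
  omega

end Graph


/-! ### Events and assembly -/

section Events

variable {V : Type*}

lemma measurableSet_coord {I : Type*} {t : Set I} {i : I} (hi : i ∈ t) (b : Bool) :
    MeasurableSet[coordM t] {ω : I → Bool | ω i = b} := by
  have h1 : MeasurableSet[MeasurableSpace.comap (fun ω : I → Bool => ω i) inferInstance]
      {ω : I → Bool | ω i = b} := ⟨{b}, measurableSet_bool {b}, rfl⟩
  exact le_meas (le_iSup₂ (f := fun i (_ : i ∈ t) => MeasurableSpace.comap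
    (fun ω : I → Bool => ω i) inferInstance) i hi) h1

def Acyl (G : SimpleGraph V) (r : Finset G.edgeSet) (σ : {e // e ∈ r} → Bool) :
    Set (Config G) := {ω | ∀ e (h : e ∈ r), ω e = σ ⟨e, h⟩}

open scoped Classical in
def cfg (G : SimpleGraph V) (r : Finset G.edgeSet) (σ : {e // e ∈ r} → Bool) : Config G :=
  fun e => if h : e ∈ r then σ ⟨e, h⟩ else false

def Bev (G : SimpleGraph V) (v : V) (m : ℕ) (r : Finset G.edgeSet) (w : V) :
    Set (Config G) :=
  {ω | ∃ p : G.Walk w v, p.length ≤ m ∧ IsOpenWalk G ω p ∧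
    ∀ e (he : e ∈ p.edges), (⟨e, p.edges_subset_edgeSet he⟩ : G.edgeSet) ∉ r}

def AdmP (G : SimpleGraph V) (u : V) (n : ℕ)
    (q : Σ r : Finset G.edgeSet, ({e // e ∈ r} → Bool)) (w : V) : Prop :=
  Rset G u n (cfg G q.1 q.2) = ↑q.1 ∧
    (openGraph G (cfg G q.1 q.2)).edist u w = (n : ℕ∞)

lemma measurableSet_Acyl (G : SimpleGraph V) (r : Finset G.edgeSet)
    (σ : {e // e ∈ r} → Bool) :
    MeasurableSet[coordM (↑r : Set G.edgeSet)] (Acyl G r σ) := by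
  have heq : Acyl G r σ = ⋂ (e : {e // e ∈ r}), {ω : Config G | ω e.1 = σ e} := by
    ext ω
    simp only [Acyl, Set.mem_iInter, Set.mem_setOf_eq, Subtype.forall]
  rw [heq]
  exact MeasurableSet.iInter fun e => measurableSet_coord e.2 (σ e)

lemma measurableSet_Bev (G : SimpleGraph V) [Countable V] (v : V) (m : ℕ)
    (r : Finset G.edgeSet) (w : V) :
    MeasurableSet[coordM ((↑r : Set G.edgeSet)ᶜ)] (Bev G v m r w) := by
  haveI := walk_countable (G := G) w v
  have heq : Bev G v m r w = ⋃ (p : {p : G.Walk w v // p.length ≤ m ∧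
      ∀ e (he : e ∈ p.edges), (⟨e, p.edges_subset_edgeSet he⟩ : G.edgeSet) ∉ r}),
      ⋂ (e : {e // e ∈ p.1.edges}),
        {ω : Config G | ω ⟨e.1, p.1.edges_subset_edgeSet e.2⟩ = true} := by
    ext ω
    constructor
    · rintro ⟨p, h1, h2, h3⟩
      exact Set.mem_iUnion.2 ⟨⟨p, h1, h3⟩, Set.mem_iInter.2 fun e => h2 e.1 e.2⟩
    · rintro hω
      obtain ⟨⟨p, h1, h3⟩, hmem⟩ := Set.mem_iUnion.1 hω
      exact ⟨p, h1, fun e he => Set.mem_iInter.1 hmem ⟨e, he⟩, h3⟩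
  rw [heq]
  apply MeasurableSet.iUnion
  intro p
  apply MeasurableSet.iInter
  intro e
  have hi : (⟨e.1, p.1.edges_subset_edgeSet e.2⟩ : G.edgeSet) ∈ (↑r : Set G.edgeSet)ᶜ :=
    fun hc => p.2.2 e.1 e.2 hc
  exact measurableSet_coord hi true

lemma mem_support_of_mem_edges' {G : SimpleGraph V} {a b x : V} (p : G.Walk a b)
    {e : Sym2 V} (he : e ∈ p.edges) (hx : x ∈ e) : x ∈ p.support := by
  induction e using Sym2.ind with
  | _ c d =>
    rcases Sym2.mem_iff.1 hx with rfl | rfl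
    · exact p.fst_mem_support_of_mem_edges he
    · exact p.snd_mem_support_of_mem_edges he

lemma agree_of_mem_Acyl {G : SimpleGraph V} {u : V} {n : ℕ}
    (q : Σ r : Finset G.edgeSet, ({e // e ∈ r} → Bool)) {ω : Config G}
    (hω : ω ∈ Acyl G q.1 q.2) (hR : Rset G u n (cfg G q.1 q.2) = ↑q.1) :
    ∀ e ∈ Rset G u n (cfg G q.1 q.2), ω e = cfg G q.1 q.2 e := by
  intro e he
  rw [hR] at he
  have he' : e ∈ q.1 := he
  rw [cfg, dif_pos he']
  exact hω e he'

lemma tsum_Acyl_le (G : SimpleGraph V) [Countable V] (p : ℝ) {u w : V} {n : ℕ}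
    (hn : 1 ≤ n) :
    ∑' q : {q : Σ r : Finset G.edgeSet, ({e // e ∈ r} → Bool) // AdmP G u n q w},
      percMeasure G p (Acyl G q.1.1 q.1.2)
      ≤ SintMat G p n u w := by
  classical
  have hdisj : Pairwise (Function.onFun Disjoint
      fun q : {q : Σ r : Finset G.edgeSet, ({e // e ∈ r} → Bool) // AdmP G u n q w} =>
        Acyl G q.1.1 q.1.2) := by
    intro q q' hne
    rw [Function.onFun, Set.disjoint_left]
    intro ω hq hq'
    apply hne
    have hag := agree_of_mem_Acyl q.1 hq q.2.1
    have hag' := agree_of_mem_Acyl q'.1 hq' q'.2.1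
    have hR : Rset G u n ω = ↑q.1.1 := by
      rw [Rset_eq_of_agree hn hag, q.2.1]
    have hR' : Rset G u n ω = ↑q'.1.1 := by
      rw [Rset_eq_of_agree hn hag', q'.2.1]
    have hr : q.1.1 = q'.1.1 := Finset.coe_injective (hR.symm.trans hR')
    apply Subtype.ext
    obtain ⟨⟨r1, σ1⟩, hq1⟩ := q
    obtain ⟨⟨r2, σ2⟩, hq2⟩ := q'
    simp only at hr hq hq' ⊢
    subst hr
    have hσ : σ1 = σ2 := by
      funext e
      have h1 := hq e.1 e.2
      have h2 := hq' e.1 e.2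
      exact h1.symm.trans h2
    rw [hσ]
  have hmeas : ∀ q : {q : Σ r : Finset G.edgeSet, ({e // e ∈ r} → Bool) // AdmP G u n q w},
      MeasurableSet (Acyl G q.1.1 q.1.2) :=
    fun q => coordM_le _ _ (measurableSet_Acyl G q.1.1 q.1.2)
  rw [← measure_iUnion hdisj hmeas]
  apply measure_mono
  rintro ω hω
  obtain ⟨q, hq⟩ := Set.mem_iUnion.1 hω
  show (openGraph G ω).edist u w = (n : ℕ∞)
  exact edist_eq_of_agree hn (agree_of_mem_Acyl q.1 hq q.2.1) w q.2.2

end Events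


end S6

end

open Percolation MeasureTheory Filter Set
open scoped ENNReal

/-- For a connected, locally finite graph `G`, `p ∈ [0,1]` and
`n, m ≥ 0`, entrywise `A^int_{p,n,n+m} ≼ S^int_{p,n} B^int_{p,m}`, i.e.
`A^int_{p,n,n+m}(u,v) ≤ Σ_w S^int_{p,n}(u,w) B^int_{p,m}(w,v)` for all `u, v`. -/
theorem statement_6 {V : Type*} (G : SimpleGraph V) (hconn : G.Connected)
    (hlf : G.LocallyFinite) (p : ℝ) (hp : p ∈ Set.Icc (0 : ℝ) 1) (n m : ℕ) (u v : V) :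
    AintMat G p n (n + m) u v ≤ ∑' w : V, SintMat G p n u w * BintMat G p m w v := by
  classical
  have hVc : Countable V := by
    have h1 : (Set.univ : Set V).Countable := by
      have hsub : (Set.univ : Set V) ⊆ ⋃ k : ℕ, {x : V | G.edist u x ≤ (k : ℕ∞)} := by
        intro x _
        have hr : G.edist u x ≠ ⊤ := SimpleGraph.edist_ne_top_iff_reachable.2 (hconn u x)
        obtain ⟨k, hk⟩ : ∃ k : ℕ, G.edist u x = (k : ℕ∞) := by
          cases hd : G.edist u x using ENat.recTopCoe with
          | top => exact absurd hd hr
          | coe j => exact ⟨j, rfl⟩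
        exact Set.mem_iUnion.2 ⟨k, le_of_eq hk⟩
      exact Set.Countable.mono hsub
        (Set.countable_iUnion fun k => (S6.vball_finite G hlf u k).countable)
    exact Set.countable_univ_iff.1 h1
  haveI := hVc
  haveI hEc : Countable G.edgeSet := inferInstance
  rcases Nat.eq_zero_or_pos n with rfl | hn
  · -- case n = 0
    have hseteq : {ω : Config G | ((0 : ℕ) : ℕ∞) ≤ (openGraph G ω).edist u v ∧
        (openGraph G ω).edist u v ≤ (((0 + m : ℕ)) : ℕ∞)}
        = {ω : Config G | (openGraph G ω).edist u v ≤ ((m : ℕ) : ℕ∞)} := by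
      ext ω
      simp
    have hA : AintMat G p 0 (0 + m) u v = BintMat G p m u v := by
      show percMeasure G p _ = percMeasure G p _
      exact congrArg _ hseteq
    have hS : SintMat G p 0 u u = 1 := by
      have huniv : {ω : Config G | (openGraph G ω).edist u u = ((0 : ℕ) : ℕ∞)} = Set.univ := by
        ext ω
        simp [SimpleGraph.edist_self]
      show percMeasure G p _ = 1
      rw [huniv]
      haveI : IsProbabilityMeasure (percMeasure G p) :=
        S6.bernoulliProduct_isProb inferInstance _
      exact measure_univ
    calc AintMat G p 0 (0 + m) u v = SintMat G p 0 u u * BintMat G p m u v := by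
          rw [hA, hS, one_mul]
      _ ≤ ∑' w : V, SintMat G p 0 u w * BintMat G p m w v := ENNReal.le_tsum u
  · -- main case 1 ≤ n
    have hcover : {ω : Config G | (n : ℕ∞) ≤ (openGraph G ω).edist u v ∧
        (openGraph G ω).edist u v ≤ (((n + m : ℕ)) : ℕ∞)} ⊆
        ⋃ (w : V), ⋃ (q : {q : Σ r : Finset G.edgeSet, ({e // e ∈ r} → Bool) //
            S6.AdmP G u n q w}),
          (S6.Acyl G q.1.1 q.1.2 ∩ S6.Bev G v m q.1.1 w) := by
      rintro ω ⟨h1, h2⟩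
      obtain ⟨w, hw, pw, hp1, hp2, hp3⟩ := S6.coverage hn ω h1 h2
      set r : Finset G.edgeSet := (S6.Rset_finite G hlf u n ω).toFinset with hr
      have hrs : (↑r : Set G.edgeSet) = S6.Rset G u n ω :=
        (S6.Rset_finite G hlf u n ω).coe_toFinset
      set σ : {e // e ∈ r} → Bool := fun e => ω e.1 with hσ
      have hωA : ω ∈ S6.Acyl G r σ := fun e h => rfl
      have hagree : ∀ e ∈ S6.Rset G u n ω, S6.cfg G r σ e = ω e := by
        intro e he
        have her : e ∈ r := by rw [← Finset.mem_coe, hrs]; exact he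
        rw [S6.cfg, dif_pos her]
      have hAdm : S6.AdmP G u n ⟨r, σ⟩ w := by
        constructor
        · show S6.Rset G u n (S6.cfg G r σ) = ↑r
          rw [S6.Rset_eq_of_agree hn hagree, hrs]
        · exact S6.edist_eq_of_agree hn hagree w hw
      refine Set.mem_iUnion.2 ⟨w, Set.mem_iUnion.2 ⟨⟨⟨r, σ⟩, hAdm⟩, hωA, ?_⟩⟩
      refine ⟨pw, hp1, hp2, ?_⟩
      intro e he hmem
      have hmem' : (⟨e, pw.edges_subset_edgeSet he⟩ : G.edgeSet) ∈ S6.Rset G u n ω := by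
        rw [← hrs]
        exact hmem
      obtain ⟨x, hxe, hxd⟩ := hmem'
      exact hp3 x (S6.mem_support_of_mem_edges' pw he hxe) hxd
    calc AintMat G p n (n + m) u v
        ≤ percMeasure G p (⋃ (w : V),
            ⋃ (q : {q : Σ r : Finset G.edgeSet, ({e // e ∈ r} → Bool) //
              S6.AdmP G u n q w}),
            (S6.Acyl G q.1.1 q.1.2 ∩ S6.Bev G v m q.1.1 w)) := measure_mono hcover
      _ ≤ ∑' w : V, percMeasure G p
            (⋃ (q : {q : Σ r : Finset G.edgeSet, ({e // e ∈ r} → Bool) //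
              S6.AdmP G u n q w}),
            (S6.Acyl G q.1.1 q.1.2 ∩ S6.Bev G v m q.1.1 w)) := measure_iUnion_le _
      _ ≤ ∑' w : V, ∑' q : {q : Σ r : Finset G.edgeSet, ({e // e ∈ r} → Bool) //
              S6.AdmP G u n q w},
            percMeasure G p (S6.Acyl G q.1.1 q.1.2 ∩ S6.Bev G v m q.1.1 w) :=
          ENNReal.tsum_le_tsum fun w => measure_iUnion_le _
      _ ≤ ∑' w : V, SintMat G p n u w * BintMat G p m w v := by
          apply ENNReal.tsum_le_tsum
          intro w
          have hfac : ∀ q : {q : Σ r : Finset G.edgeSet, ({e // e ∈ r} → Bool) //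
              S6.AdmP G u n q w},
              percMeasure G p (S6.Acyl G q.1.1 q.1.2 ∩ S6.Bev G v m q.1.1 w)
              = percMeasure G p (S6.Acyl G q.1.1 q.1.2)
                * percMeasure G p (S6.Bev G v m q.1.1 w) := by
            intro q
            exact S6.bernoulliProduct_indep inferInstance _
              (S6.measurableSet_Acyl G q.1.1 q.1.2)
              (S6.measurableSet_Bev G v m q.1.1 w)
          have hBle : ∀ (r : Finset G.edgeSet),
              percMeasure G p (S6.Bev G v m r w) ≤ BintMat G p m w v := by
            intro r
            apply measure_mono
            rintro ω ⟨pp, hl, ho, _⟩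
            exact (S6.edist_le_iff_open_walk G ω w v m).2 ⟨pp, hl, ho⟩
          calc ∑' q : {q : Σ r : Finset G.edgeSet, ({e // e ∈ r} → Bool) //
                  S6.AdmP G u n q w},
                percMeasure G p (S6.Acyl G q.1.1 q.1.2 ∩ S6.Bev G v m q.1.1 w)
              = ∑' q : {q : Σ r : Finset G.edgeSet, ({e // e ∈ r} → Bool) //
                  S6.AdmP G u n q w},
                percMeasure G p (S6.Acyl G q.1.1 q.1.2)
                  * percMeasure G p (S6.Bev G v m q.1.1 w) := tsum_congr hfac
            _ ≤ ∑' q : {q : Σ r : Finset G.edgeSet, ({e // e ∈ r} → Bool) //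
                  S6.AdmP G u n q w},
                percMeasure G p (S6.Acyl G q.1.1 q.1.2) * BintMat G p m w v :=
                ENNReal.tsum_le_tsum fun q => mul_le_mul' le_rfl (hBle q.1.1)
            _ = (∑' q : {q : Σ r : Finset G.edgeSet, ({e // e ∈ r} → Bool) //
                  S6.AdmP G u n q w},
                percMeasure G p (S6.Acyl G q.1.1 q.1.2)) * BintMat G p m w v :=
                ENNReal.tsum_mul_right
            _ ≤ SintMat G p n u w * BintMat G p m w v :=
                mul_le_mul' (S6.tsum_Acyl_le G p hn) le_rfl
end
end

section
/- Let G=(V,E) be a graph, let M∈[0,∞]^{V×V} be a nonnegative matrix, and let 1 ≤ q_1 < q_2 ≤ ∞. Then ‖M‖_{q_2→q_2} ≤ ‖M‖_{q_1→q_1} · [sup_{v∈V} |{u∈V : M(v,u) ≠ 0}|]^{(q_2−q_1)/(q_1 q_2)}, with the convention that the exponent (q_2−q_1)/(q_1 q_2) equals 1/q_1 when q_2 = ∞. -/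
open MeasureTheory Filter Set
open scoped ENNReal NNReal

noncomputable section

open Percolation MeasureTheory Filter Set
open scoped ENNReal

section Stmt12Aux

variable {V : Type*}

private lemma stmt12_tsum_holder {ι : Type*} (w f : ι → ℝ≥0∞) {p : ℝ} (hp : 1 ≤ p) :
    ∑' i, w i * f i ≤ (∑' i, w i) ^ (1 - p⁻¹) * (∑' i, w i * f i ^ p) ^ p⁻¹ := by
  rw [ENNReal.tsum_eq_iSup_sum]
  refine iSup_le fun s => ?_
  have h0 : (0:ℝ) ≤ 1 - p⁻¹ := by
    rw [sub_nonneg]; exact inv_le_one_of_one_le₀ hp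
  calc ∑ i ∈ s, w i * f i
      ≤ (∑ i ∈ s, w i) ^ (1 - p⁻¹) * (∑ i ∈ s, w i * f i ^ p) ^ p⁻¹ :=
        ENNReal.inner_le_weight_mul_Lp_of_nonneg s hp w f
    _ ≤ _ :=
        mul_le_mul' (ENNReal.rpow_le_rpow (ENNReal.sum_le_tsum s) h0)
          (ENNReal.rpow_le_rpow (ENNReal.sum_le_tsum s)
            (inv_nonneg.mpr (le_trans zero_le_one hp)))

private lemma stmt12_single_le {f : V → ℝ≥0∞} {q : ℝ≥0∞} (hq : 0 < q.toReal ∨ q = ∞)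
    (v : V) : f v ≤ lqNorm q f := by
  rcases hq with hq | rfl
  · have hq' : q ≠ ∞ := by rintro rfl; simp at hq
    rw [lqNorm, if_neg hq']
    calc f v = (f v ^ q.toReal) ^ (1 / q.toReal) := by
          rw [← ENNReal.rpow_mul, mul_one_div, div_self hq.ne', ENNReal.rpow_one]
      _ ≤ _ := ENNReal.rpow_le_rpow (ENNReal.le_tsum v) (le_of_lt (one_div_pos.mpr hq))
  · rw [lqNorm, if_pos rfl]; exact le_iSup f v

private lemma stmt12_lqNorm_ne_zero {f : V → ℝ≥0∞} {q : ℝ≥0∞}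
    (hq : 0 < q.toReal ∨ q = ∞) (h0 : f ≠ 0) : lqNorm q f ≠ 0 := by
  obtain ⟨v, hv⟩ : ∃ v, f v ≠ 0 := by
    by_contra h; push_neg at h; exact h0 (funext fun v => h v)
  intro h
  exact hv (le_antisymm (h ▸ stmt12_single_le hq v) zero_le)

private lemma stmt12_lqNorm_zero {q : ℝ≥0∞} (hq : 1 ≤ q) :
    lqNorm q (0 : V → ℝ≥0∞) = 0 := by
  rw [lqNorm]
  split
  · simp
  · rename_i hq'
    have h0 : 0 < q.toReal := ENNReal.toReal_pos (by rintro rfl; simp at hq) hq'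
    rw [tsum_congr (fun v => by
      simp [ENNReal.zero_rpow_of_pos h0] : ∀ v : V, (0 : V → ℝ≥0∞) v ^ q.toReal = 0)]
    rw [tsum_zero, ENNReal.zero_rpow_of_pos (one_div_pos.mpr h0)]

private lemma stmt12_le_opNorm {M : V → V → ℝ≥0∞} {q : ℝ≥0∞} {f : V → ℝ≥0∞}
    (h0 : f ≠ 0) (ht : lqNorm q f ≠ ∞) :
    lqNorm q (matMul M f) / lqNorm q f ≤ opNorm q M :=
  le_iSup (fun g : {g : V → ℝ≥0∞ // g ≠ 0 ∧ lqNorm q g ≠ ∞} =>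
    lqNorm q (matMul M g.1) / lqNorm q g.1) ⟨f, h0, ht⟩

private lemma stmt12_matMul_le {M : V → V → ℝ≥0∞} {q : ℝ≥0∞} (h1 : 1 ≤ q) (hq : q ≠ ⊤)
    (hpos : opNorm q M ≠ 0) (f : V → ℝ≥0∞) :
    lqNorm q (matMul M f) ≤ opNorm q M * lqNorm q f := by
  have hqr : 0 < q.toReal := ENNReal.toReal_pos (by rintro rfl; simp at h1) hq
  by_cases h0 : f = 0
  · subst h0
    have hm : matMul M (0 : V → ℝ≥0∞) = 0 := by
      funext v; simp [matMul]
    rw [hm, stmt12_lqNorm_zero h1, mul_zero]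
  by_cases ht : lqNorm q f = ∞
  · rw [ht, ENNReal.mul_top hpos]; exact le_top
  have h := stmt12_le_opNorm (M := M) h0 ht
  rwa [ENNReal.div_le_iff (stmt12_lqNorm_ne_zero (Or.inl hqr) h0) ht] at h

private lemma stmt12_opNorm_pos {M : V → V → ℝ≥0∞} {q : ℝ≥0∞} (h1 : 1 ≤ q) (hq : q ≠ ⊤)
    {v₀ u₀ : V} (h : M v₀ u₀ ≠ 0) : 0 < opNorm q M := by
  classical
  have hqr : 0 < q.toReal := ENNReal.toReal_pos (by rintro rfl; simp at h1) hq
  set f : V → ℝ≥0∞ := fun w => if w = u₀ then 1 else 0 with hf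
  have h0 : f ≠ 0 := by
    intro h'
    have := congrFun h' u₀
    simp [hf] at this
  have hlq : lqNorm q f = 1 := by
    rw [lqNorm, if_neg hq]
    have he : ∀ w, f w ^ q.toReal = f w := by
      intro w
      by_cases hw : w = u₀ <;> simp [hf, hw, ENNReal.zero_rpow_of_pos hqr]
    rw [tsum_congr he, hf, tsum_ite_eq]
    simp
  have hMf : matMul M f v₀ = M v₀ u₀ := by
    have he : ∀ u, M v₀ u * f u = if u = u₀ then M v₀ u₀ else 0 := by
      intro u
      by_cases hu : u = u₀ <;> simp [hf, hu]
    simp only [matMul]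
    rw [tsum_congr he, tsum_ite_eq]
  have hle : M v₀ u₀ ≤ opNorm q M := by
    have h2 := stmt12_le_opNorm (M := M) h0 (by rw [hlq]; exact ENNReal.one_ne_top)
    rw [hlq, div_one] at h2
    refine le_trans ?_ h2
    calc M v₀ u₀ = matMul M f v₀ := hMf.symm
      _ ≤ lqNorm q (matMul M f) := stmt12_single_le (Or.inl hqr) v₀
  exact lt_of_lt_of_le (pos_iff_ne_zero.mpr h) hle

private lemma stmt12_rowsum_le {M : V → V → ℝ≥0∞} {q : ℝ≥0∞} (h1 : 1 ≤ q) (hq : q ≠ ⊤)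
    (hpos : opNorm q M ≠ 0) (v : V) (hfin : {u | M v u ≠ 0}.Finite) :
    ∑' u, M v u ≤ opNorm q M * (({u | M v u ≠ 0}.encard : ℕ∞) : ℝ≥0∞) ^ (1 / q.toReal) := by
  classical
  have hqr : 0 < q.toReal := ENNReal.toReal_pos (by rintro rfl; simp at h1) hq
  set T := hfin.toFinset with hT
  set f : V → ℝ≥0∞ := fun u => if u ∈ T then 1 else 0 with hf
  have hMf : matMul M f v = ∑' u, M v u := by
    refine tsum_congr fun u => ?_
    by_cases hu : u ∈ T
    · simp [hf, hu]
    · have h0 : M v u = 0 := by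
        by_contra h0
        exact hu (by simpa [hT] using (hfin.mem_toFinset).mpr h0)
      simp [hf, hu, h0]
  have hcard : lqNorm q f = ((T.card : ℝ≥0∞)) ^ (1 / q.toReal) := by
    rw [lqNorm, if_neg hq]
    congr 1
    have he : ∀ u, f u ^ q.toReal = f u := by
      intro u
      by_cases hu : u ∈ T <;> simp [hf, hu, ENNReal.zero_rpow_of_pos hqr]
    rw [tsum_congr he]
    rw [tsum_eq_sum (s := T) (fun u hu => by simp [hf, hu])]
    simp [hf]
  have henc : ((({u | M v u ≠ 0}.encard : ℕ∞)) : ℝ≥0∞) = (T.card : ℝ≥0∞) := by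
    rw [hfin.encard_eq_coe_toFinset_card]
    exact ENat.toENNReal_coe _
  calc ∑' u, M v u = matMul M f v := hMf.symm
    _ ≤ lqNorm q (matMul M f) := stmt12_single_le (Or.inl hqr) v
    _ ≤ opNorm q M * lqNorm q f := stmt12_matMul_le h1 hq hpos f
    _ = _ := by rw [hcard, henc]

end Stmt12Aux

/-- For any nonnegative matrix `M ∈ [0,∞]^{V×V}` and
`1 ≤ q₁ < q₂ ≤ ∞`,
`‖M‖_{q₂→q₂} ≤ ‖M‖_{q₁→q₁} · (sup_v |{u : M(v,u) ≠ 0}|)^{(q₂-q₁)/(q₁q₂)}`,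
where the exponent is `1/q₁` when `q₂ = ∞`. -/
theorem statement_12 {V : Type*} (M : V → V → ℝ≥0∞) (q₁ q₂ : ℝ≥0∞)
    (h1 : 1 ≤ q₁) (h12 : q₁ < q₂) :
    opNorm q₂ M ≤
      opNorm q₁ M *
        (⨆ v : V, (({u : V | M v u ≠ 0}.encard : ℕ∞) : ℝ≥0∞)) ^
          (if q₂ = ∞ then 1 / q₁.toReal
           else (q₂.toReal - q₁.toReal) / (q₁.toReal * q₂.toReal)) := by
  classical
  set D := ⨆ v : V, (({u : V | M v u ≠ 0}.encard : ℕ∞) : ℝ≥0∞) with hDdef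
  have hq₁t : q₁ ≠ ⊤ := h12.ne_top
  have hq₁0 : q₁ ≠ 0 := by rintro rfl; simp at h1
  have hp₁0 : 0 < q₁.toReal := ENNReal.toReal_pos hq₁0 hq₁t
  have h1q₂ : 1 ≤ q₂ := h1.trans h12.le
  -- trivial case `M = 0`
  by_cases hM : ∀ v u, M v u = 0
  · rw [opNorm]
    refine iSup_le ?_
    intro f
    have hmz : matMul M f.1 = 0 := funext fun v => by simp [matMul, hM]
    rw [hmz, stmt12_lqNorm_zero h1q₂, ENNReal.zero_div]
    exact zero_le
  push_neg at hM
  obtain ⟨v₀, u₀, hvu⟩ := hM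
  have hpos : 0 < opNorm q₁ M := stmt12_opNorm_pos h1 hq₁t hvu
  have hα : 0 < (if q₂ = ∞ then 1 / q₁.toReal
      else (q₂.toReal - q₁.toReal) / (q₁.toReal * q₂.toReal)) := by
    by_cases hq : q₂ = ∞
    · rw [if_pos hq]; exact one_div_pos.mpr hp₁0
    · rw [if_neg hq]
      have hq₂r : 0 < q₂.toReal := ENNReal.toReal_pos (by rintro rfl; simp at h1q₂) hq
      have hlt : q₁.toReal < q₂.toReal := (ENNReal.toReal_lt_toReal hq₁t hq).mpr h12
      apply div_pos (by linarith) (by positivity)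
  -- case `D = ⊤`
  by_cases hD : D = ⊤
  · rw [hD, ENNReal.top_rpow_of_pos hα, ENNReal.mul_top hpos.ne']
    exact le_top
  -- all rows have finite support
  have hfin : ∀ v, {u | M v u ≠ 0}.Finite := by
    intro v
    rw [← Set.encard_ne_top_iff]
    intro h
    refine hD (top_le_iff.mp ?_)
    have hle : ((({u | M v u ≠ 0}.encard : ℕ∞)) : ℝ≥0∞) ≤ D := by
      rw [hDdef]
      exact le_iSup (fun v : V => ((({u : V | M v u ≠ 0}.encard : ℕ∞)) : ℝ≥0∞)) v
    rwa [h, ENat.toENNReal_top] at hle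
  -- case `‖M‖_{q₁→q₁} = ⊤`
  by_cases hN : opNorm q₁ M = ⊤
  · have hD0 : D ≠ 0 := by
      intro h0
      have hne : {u | M v₀ u ≠ 0}.Nonempty := ⟨u₀, hvu⟩
      have h1le : (1 : ℝ≥0∞) ≤ (({u | M v₀ u ≠ 0}.encard : ℕ∞) : ℝ≥0∞) := by
        have := Set.one_le_encard_iff_nonempty.mpr hne
        simpa using ENat.toENNReal_le.mpr this
      have hle : ((({u | M v₀ u ≠ 0}.encard : ℕ∞)) : ℝ≥0∞) ≤ D := by
        rw [hDdef]
        exact le_iSup (fun v : V => ((({u : V | M v u ≠ 0}.encard : ℕ∞)) : ℝ≥0∞)) v₀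
      rw [h0, le_zero_iff] at hle
      rw [hle] at h1le
      simp at h1le
    have hDα : D ^ (if q₂ = ∞ then 1 / q₁.toReal
        else (q₂.toReal - q₁.toReal) / (q₁.toReal * q₂.toReal)) ≠ 0 := by
      rw [Ne, ENNReal.rpow_eq_zero_iff]
      push_neg
      exact ⟨fun h => absurd h hD0, fun h => absurd h hD⟩
    rw [hN, ENNReal.top_mul hDα]
    exact le_top
  -- row sums are bounded by `‖M‖_{q₁→q₁} * D ^ (1/q₁)`
  have hrow : ∀ v, (∑' u, M v u) ≤ opNorm q₁ M * D ^ (1 / q₁.toReal) := by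
    intro v
    refine (stmt12_rowsum_le h1 hq₁t hpos.ne' v (hfin v)).trans ?_
    refine mul_le_mul_right (ENNReal.rpow_le_rpow ?_ (le_of_lt (one_div_pos.mpr hp₁0))) _
    rw [hDdef]
    exact le_iSup (fun v : V => ((({u : V | M v u ≠ 0}.encard : ℕ∞)) : ℝ≥0∞)) v
  by_cases hq₂t : q₂ = ∞
  · -- case `q₂ = ∞`
    subst hq₂t
    rw [if_pos rfl, opNorm]
    refine iSup_le ?_
    rintro ⟨f, hf0, hft⟩
    show lqNorm ⊤ (matMul M f) / lqNorm ⊤ f ≤ _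
    rw [ENNReal.div_le_iff (stmt12_lqNorm_ne_zero (q := ⊤) (Or.inr rfl) hf0) hft]
    have hlqf : lqNorm ⊤ f = ⨆ w, f w := by rw [lqNorm, if_pos rfl]
    have hlqM : lqNorm ⊤ (matMul M f) = ⨆ v, matMul M f v := by rw [lqNorm, if_pos rfl]
    rw [hlqf, hlqM]
    refine iSup_le fun v => ?_
    calc matMul M f v = ∑' u, M v u * f u := rfl
      _ ≤ ∑' u, M v u * ⨆ w, f w :=
          ENNReal.tsum_le_tsum fun u => mul_le_mul_right (le_iSup f u) _
      _ = (∑' u, M v u) * ⨆ w, f w := ENNReal.tsum_mul_right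
      _ ≤ opNorm q₁ M * D ^ (1 / q₁.toReal) * ⨆ w, f w :=
          mul_le_mul_left (hrow v) _
  · -- case `q₂ < ∞`
    rw [if_neg hq₂t]
    conv_lhs => rw [opNorm]
    have hq₂r : 0 < q₂.toReal := ENNReal.toReal_pos (by rintro rfl; simp at h1q₂) hq₂t
    have hlt : q₁.toReal < q₂.toReal := (ENNReal.toReal_lt_toReal hq₁t hq₂t).mpr h12
    set p₁ := q₁.toReal with hp₁def
    set p₂ := q₂.toReal with hp₂def
    set N := opNorm q₁ M with hNdef
    set K := N * D ^ (1 / p₁) with hKdef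
    refine iSup_le ?_
    rintro ⟨f, hf0, hft⟩
    show lqNorm q₂ (matMul M f) / lqNorm q₂ f ≤ _
    rw [ENNReal.div_le_iff (stmt12_lqNorm_ne_zero (Or.inl hq₂r) hf0) hft]
    set g : V → ℝ≥0∞ := fun u => f u ^ (p₂ / p₁) with hgdef
    have hθ0 : (0:ℝ) ≤ 1 - p₁ / p₂ := by
      rw [sub_nonneg, div_le_one hq₂r]; exact hlt.le
    have key : ∀ v, matMul M f v ≤ K ^ (1 - p₁ / p₂) * (matMul M g v) ^ (p₁ / p₂) := by
      intro v
      have hp : 1 ≤ p₂ / p₁ := (one_le_div hp₁0).mpr hlt.le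
      have h := stmt12_tsum_holder (fun u => M v u) f hp
      rw [inv_div] at h
      simp only [matMul, hgdef]
      refine h.trans ?_
      exact mul_le_mul_left (ENNReal.rpow_le_rpow (hrow v) hθ0) _
    have hgl : (lqNorm q₁ g) ^ p₁ = ∑' u, f u ^ p₂ := by
      rw [lqNorm, if_neg hq₁t, ← ENNReal.rpow_mul, one_div,
        inv_mul_cancel₀ hp₁0.ne', ENNReal.rpow_one]
      refine tsum_congr fun u => ?_
      simp only [hgdef]
      rw [← ENNReal.rpow_mul, div_mul_cancel₀ _ hp₁0.ne']
    have hMg : ∑' v, (matMul M g v) ^ p₁ ≤ N ^ p₁ * ∑' u, f u ^ p₂ := by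
      have h1' : ∑' v, (matMul M g v) ^ p₁ = (lqNorm q₁ (matMul M g)) ^ p₁ := by
        rw [lqNorm, if_neg hq₁t, ← ENNReal.rpow_mul, one_div,
          inv_mul_cancel₀ hp₁0.ne', ENNReal.rpow_one]
      rw [h1', ← hgl, ← ENNReal.mul_rpow_of_nonneg _ _ hp₁0.le]
      exact ENNReal.rpow_le_rpow (stmt12_matMul_le h1 hq₁t hpos.ne' g) hp₁0.le
    have ea : (1 - p₁ / p₂) * p₂ = p₂ - p₁ := by
      rw [one_sub_mul, div_mul_cancel₀ _ hq₂r.ne']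
    have eb : (p₁ / p₂) * p₂ = p₁ := div_mul_cancel₀ _ hq₂r.ne'
    have hsum : ∑' v, (matMul M f v) ^ p₂ ≤ K ^ (p₂ - p₁) * (N ^ p₁ * ∑' u, f u ^ p₂) := by
      calc ∑' v, (matMul M f v) ^ p₂
          ≤ ∑' v, (K ^ (1 - p₁ / p₂) * (matMul M g v) ^ (p₁ / p₂)) ^ p₂ :=
            ENNReal.tsum_le_tsum fun v => ENNReal.rpow_le_rpow (key v) hq₂r.le
        _ = K ^ (p₂ - p₁) * ∑' v, (matMul M g v) ^ p₁ := by
            rw [← ENNReal.tsum_mul_left]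
            refine tsum_congr fun v => ?_
            rw [ENNReal.mul_rpow_of_nonneg _ _ hq₂r.le, ← ENNReal.rpow_mul,
              ← ENNReal.rpow_mul, ea, eb]
        _ ≤ _ := mul_le_mul_right hMg _
    have e1 : (p₂ - p₁) * (1 / p₂) + p₁ * (1 / p₂) = 1 := by field_simp; ring
    have e2 : (1 / p₁) * ((p₂ - p₁) * (1 / p₂)) = (p₂ - p₁) / (p₁ * p₂) := by
      field_simp
    have hc : (0:ℝ) ≤ (p₂ - p₁) * (1 / p₂) := mul_nonneg (by linarith) (by positivity)
    have halg : K ^ ((p₂ - p₁) * (1 / p₂)) * N ^ (p₁ * (1 / p₂))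
        = N * D ^ ((p₂ - p₁) / (p₁ * p₂)) := by
      rw [hKdef, ENNReal.mul_rpow_of_nonneg _ _ hc, ← ENNReal.rpow_mul, e2, mul_right_comm,
        ← ENNReal.rpow_add_of_nonneg _ _ hc
          (mul_nonneg hp₁0.le (le_of_lt (one_div_pos.mpr hq₂r))), e1, ENNReal.rpow_one]
    calc lqNorm q₂ (matMul M f)
        = (∑' v, (matMul M f v) ^ p₂) ^ (1 / p₂) := by rw [lqNorm, if_neg hq₂t]
      _ ≤ (K ^ (p₂ - p₁) * (N ^ p₁ * ∑' u, f u ^ p₂)) ^ (1 / p₂) :=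
          ENNReal.rpow_le_rpow hsum (le_of_lt (one_div_pos.mpr hq₂r))
      _ = K ^ ((p₂ - p₁) * (1 / p₂)) * (N ^ (p₁ * (1 / p₂)) * (∑' u, f u ^ p₂) ^ (1 / p₂)) := by
          rw [ENNReal.mul_rpow_of_nonneg _ _ (le_of_lt (one_div_pos.mpr hq₂r)),
            ENNReal.mul_rpow_of_nonneg _ _ (le_of_lt (one_div_pos.mpr hq₂r)),
            ← ENNReal.rpow_mul, ← ENNReal.rpow_mul]
      _ = N * D ^ ((p₂ - p₁) / (p₁ * p₂)) * (∑' u, f u ^ p₂) ^ (1 / p₂) := by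
          rw [← mul_assoc, halg]
      _ = N * D ^ ((p₂ - p₁) / (p₁ * p₂)) * lqNorm q₂ f := by
          rw [lqNorm, if_neg hq₂t]
end
end
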